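/- arXiv:1003.1158 — 5 statements merged into one kernel-verified Lean document; each statement's English description precedes it below -/
import Mathlib

section
/- For every GT-pattern P ∈ GT(λ+ρ) of rank r, one has (L_1 + wgt_1(P), L_2 + wgt_2(P), …, L_r + wgt_r(P)) = Σ_{i=1}^r k_i(P) α_i in ℝ^r, where α_1 = 2e_1 and α_i = e_i − e_{i−1} for 2 ≤ i ≤ r. Equivalently, k_i(P) = Σ_{j=i}^r (wgt_j(P) + L_j) for 2 ≤ i ≤ r, and 2k_1(P) = Σ_{j=1}^r (wgt_j(P) + L_j). -/
/-! Gelfand–Tsetlin patterns for `Sp(2r)` (type `C_r`), following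
Beineke–Brubaker–Frechette. Entries are indexed as in the paper:
row `a i` has entries `a i j` for `i+1 ≤ j ≤ r` (so the top row is `a 0`),
and row `b i` has entries `b i j` for `i ≤ j ≤ r`, `1 ≤ i ≤ r`.
All out-of-range entries are `0`. -/

/-- `Lfun l j = l 1 + l 2 + ⋯ + l j + j`. -/
def Lfun (l : ℕ → ℕ) (j : ℕ) : ℕ := (∑ t ∈ Finset.Icc 1 j, l t) + j

/-- A Gelfand–Tsetlin pattern of rank `r` in `GT(λ+ρ)`, i.e. with top row
`(L r, L (r-1), …, L 1)` where `L j = l 1 + ⋯ + l j + j`. -/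
structure GTPattern (r : ℕ) (l : ℕ → ℕ) where
  a : ℕ → ℕ → ℕ
  b : ℕ → ℕ → ℕ
  a_zero : ∀ i j, ¬(i < r ∧ i + 1 ≤ j ∧ j ≤ r) → a i j = 0
  b_zero : ∀ i j, ¬(1 ≤ i ∧ i ≤ j ∧ j ≤ r) → b i j = 0
  top : ∀ j, 1 ≤ j → j ≤ r → a 0 j = Lfun l (r + 1 - j)
  b_le_a_above : ∀ i j, 1 ≤ i → i ≤ j → j ≤ r → b i j ≤ a (i - 1) j
  a_above_le_b : ∀ i j, 1 ≤ i → i ≤ j → j < r → a (i - 1) (j + 1) ≤ b i j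
  b_le_a_below : ∀ i j, 1 ≤ i → i < r → i + 1 ≤ j → j ≤ r → b i j ≤ a i j
  a_below_le_b : ∀ i j, 1 ≤ i → i < r → i ≤ j → j < r → a i (j + 1) ≤ b i j

namespace GTPattern

variable {r : ℕ} {l : ℕ → ℕ} (P : GTPattern r l)

/-- Row sum `s_a(i) = Σ_{m=i+1}^r a_{i,m}`. -/
def sa (i : ℕ) : ℤ := ∑ m ∈ Finset.Icc (i + 1) r, (P.a i m : ℤ)

/-- Row sum `s_b(i) = Σ_{m=i}^r b_{i,m}`. -/
def sb (i : ℕ) : ℤ := ∑ m ∈ Finset.Icc i r, (P.b i m : ℤ)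

/-- The weight `wgt_i(P) = s_a(r-i) - 2 s_b(r+1-i) + s_a(r+1-i)`. -/
def wgt (i : ℕ) : ℤ := P.sa (r - i) - 2 * P.sb (r + 1 - i) + P.sa (r + 1 - i)

/-- The `k`-coordinates `k_i(P)`. -/
def kcoord (i : ℕ) : ℤ :=
  if i = 1 then P.sa 0 - ∑ m ∈ Finset.Icc 1 r, (P.sb m - P.sa m)
  else P.sa 0 - 2 * ∑ m ∈ Finset.Icc 1 (r + 1 - i), (P.sb m - P.sa m)
        - P.sa (r + 1 - i) + ∑ m ∈ Finset.Icc 1 (r + 1 - i), (P.a 0 m : ℤ)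

/-- `v_{i,j} = Σ_{m=i}^j (a_{i-1,m} - b_{i,m})`. -/
def v (i j : ℕ) : ℤ := ∑ m ∈ Finset.Icc i j, ((P.a (i - 1) m : ℤ) - (P.b i m : ℤ))

/-- `w_{i,j} = Σ_{m=j}^r (a_{i,m} - b_{i,m})`. -/
def w (i j : ℕ) : ℤ := ∑ m ∈ Finset.Icc j r, ((P.a i m : ℤ) - (P.b i m : ℤ))

/-- `u_{i,j} = v_{i,r} + w_{i,j}`. -/
def u (i j : ℕ) : ℤ := P.v i r + P.w i j

/-- `P` is minimal at `b_{i,j}` if `b_{i,j} = a_{i-1,j}`. -/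
def MinimalB (i j : ℕ) : Prop := P.b i j = P.a (i - 1) j

/-- `P` is maximal at `b_{i,j}` if `j < r` and `b_{i,j} = a_{i-1,j+1}`, or `j = r`
and `b_{i,r} = 0`. -/
def MaximalB (i j : ℕ) : Prop :=
  (j < r ∧ P.b i j = P.a (i - 1) (j + 1)) ∨ (j = r ∧ P.b i r = 0)

/-- `P` is minimal at `a_{i,j}` if `a_{i,j} = b_{i,j}`. -/
def MinimalA (i j : ℕ) : Prop := P.a i j = P.b i j

/-- `P` is maximal at `a_{i,j}` if `a_{i,j} = b_{i,j-1}`. -/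
def MaximalA (i j : ℕ) : Prop := P.a i j = P.b i (j - 1)

/-- A pattern is strict if its entries strictly decrease along each row. -/
def Strict : Prop :=
  (∀ i j, i < r → i + 1 ≤ j → j < r → P.a i (j + 1) < P.a i j) ∧
  (∀ i j, 1 ≤ i → i ≤ j → j < r → P.b i (j + 1) < P.b i j)

/-- A pattern is stable if it is strict and every entry below the top row is
minimal or maximal. -/
def Stable : Prop := P.Strict ∧
  (∀ i j, 1 ≤ i → i ≤ j → j ≤ r → P.MinimalB i j ∨ P.MaximalB i j) ∧
  (∀ i j, 1 ≤ i → i < r → i + 1 ≤ j → j ≤ r → P.MinimalA i j ∨ P.MaximalA i j)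

/-- The set of entries of row `a i`. -/
def rowA (i : ℕ) : Finset ℕ := (Finset.Icc (i + 1) r).image (P.a i)

end GTPattern

section Aux

variable {r : ℕ} {l : ℕ → ℕ}

lemma gt_telescope (P : GTPattern r l) (N : ℕ) :
    ∑ m ∈ Finset.Icc 1 N, (P.sa (m - 1) - 2 * P.sb m + P.sa m)
      = P.sa 0 - P.sa N + 2 * ∑ m ∈ Finset.Icc 1 N, (P.sa m - P.sb m) := by
  induction N with
  | zero => simp
  | succ n ih =>
    rw [Finset.sum_Icc_succ_top (by omega), Finset.sum_Icc_succ_top (by omega), ih]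
    simp only [Nat.add_sub_cancel]
    ring

lemma gt_sa_r (P : GTPattern r l) : P.sa r = 0 := by
  simp [GTPattern.sa, Finset.Icc_eq_empty (by omega : ¬ r + 1 ≤ r)]

lemma gt_sa_zero (P : GTPattern r l) : P.sa 0 = ∑ m ∈ Finset.Icc 1 r, (P.a 0 m : ℤ) := rfl

/-- Closed form of the partial sums `Σ_{j=i}^r (wgt_j + L_j)`. -/
lemma gt_S_eq (P : GTPattern r l) (i : ℕ) (hi : 1 ≤ i) (hir : i ≤ r) :
    ∑ j ∈ Finset.Icc i r, (P.wgt j + (Lfun l j : ℤ))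
      = P.sa 0 - P.sa (r + 1 - i)
        + 2 * ∑ m ∈ Finset.Icc 1 (r + 1 - i), (P.sa m - P.sb m)
        + ∑ m ∈ Finset.Icc 1 (r + 1 - i), (P.a 0 m : ℤ) := by
  have hre : ∑ j ∈ Finset.Icc i r, (P.wgt j + (Lfun l j : ℤ))
      = ∑ m ∈ Finset.Icc 1 (r + 1 - i),
          ((P.sa (m - 1) - 2 * P.sb m + P.sa m) + (P.a 0 m : ℤ)) := by
    refine Finset.sum_nbij' (fun j => r + 1 - j) (fun m => r + 1 - m) ?_ ?_ ?_ ?_ ?_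
    · intro j hj; simp only [Finset.mem_Icc] at *; omega
    · intro m hm; simp only [Finset.mem_Icc] at *; omega
    · intro j hj; simp only [Finset.mem_Icc] at hj; omega
    · intro m hm; simp only [Finset.mem_Icc] at hm; omega
    · intro j hj
      simp only [Finset.mem_Icc] at hj
      have h1 : r - j = r + 1 - j - 1 := by omega
      have h2 : r + 1 - (r + 1 - j) = j := by omega
      have h3 : P.a 0 (r + 1 - j) = Lfun l j := by
        have := P.top (r + 1 - j) (by omega) (by omega)
        rw [this, h2]
      rw [GTPattern.wgt, h1, h3]
  rw [hre, Finset.sum_add_distrib, gt_telescope]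

end Aux

lemma Icc_split_bot {j r : ℕ} (h : j ≤ r) :
    Finset.Icc j r = insert j (Finset.Icc (j + 1) r) := by
  ext x; simp only [Finset.mem_Icc, Finset.mem_insert]; omega


/-- `alphaC i j` is the `e_j`-coefficient of the simple root `α_i` of `C_r`:
`α_1 = 2 e_1` and `α_i = e_i - e_{i-1}` for `i ≥ 2`. -/

def alphaC (i j : ℕ) : ℤ :=
  if i = 1 then (if j = 1 then 2 else 0)
  else if j = i then 1 else if j = i - 1 then -1 else 0

/-- Evaluation of `Σ_i f i * alphaC i j`. -/
lemma alphaC_sum (r : ℕ) (f : ℕ → ℤ) (j : ℕ) (hj : 1 ≤ j) (hjr : j ≤ r) :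
    ∑ i ∈ Finset.Icc 1 r, f i * alphaC i j
      = (if j = 1 then 2 * f 1 else f j)
        - (if j + 1 ≤ r then f (j + 1) else 0) := by
  have hjmem : j ∈ Finset.Icc 1 r := by simp only [Finset.mem_Icc]; omega
  have hsplit : ∑ i ∈ Finset.Icc 1 r, f i * alphaC i j
      = f j * alphaC j j + ∑ i ∈ (Finset.Icc 1 r).erase j, f i * alphaC i j :=
    (Finset.add_sum_erase _ _ hjmem).symm
  have hajj : alphaC j j = if j = 1 then 2 else 1 := by
    unfold alphaC
    by_cases h : j = 1 <;> simp [h]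
  by_cases hj1 : j + 1 ≤ r
  · have hmem2 : j + 1 ∈ (Finset.Icc 1 r).erase j := by
      simp only [Finset.mem_erase, Finset.mem_Icc]; omega
    have hsplit2 : ∑ i ∈ (Finset.Icc 1 r).erase j, f i * alphaC i j
        = f (j + 1) * alphaC (j + 1) j
          + ∑ i ∈ ((Finset.Icc 1 r).erase j).erase (j + 1), f i * alphaC i j :=
      (Finset.add_sum_erase _ _ hmem2).symm
    have hrest : ∑ i ∈ ((Finset.Icc 1 r).erase j).erase (j + 1), f i * alphaC i j = 0 := by
      refine Finset.sum_eq_zero ?_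
      intro k hk
      simp only [Finset.mem_erase, Finset.mem_Icc] at hk
      have h1 : alphaC k j = 0 := by
        unfold alphaC
        by_cases hk1 : k = 1
        · have : j ≠ 1 := by omega
          simp [hk1, this]
        · have h2 : j ≠ k := by omega
          have h3 : j ≠ k - 1 := by omega
          simp [hk1, h2, h3]
      rw [h1, mul_zero]
    have haj1 : alphaC (j + 1) j = -1 := by
      unfold alphaC
      have h1 : j + 1 ≠ 1 := by omega
      have h2 : j ≠ j + 1 := by omega
      simp [h1, h2]
      exact fun h => absurd h (by omega)
    rw [hsplit, hsplit2, hrest, hajj, haj1, if_pos hj1]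
    by_cases h : j = 1 <;> simp only [h, if_pos, if_true, if_neg, if_false] <;> ring
  · have hrest : ∑ i ∈ (Finset.Icc 1 r).erase j, f i * alphaC i j = 0 := by
      refine Finset.sum_eq_zero ?_
      intro k hk
      simp only [Finset.mem_erase, Finset.mem_Icc] at hk
      have h1 : alphaC k j = 0 := by
        unfold alphaC
        by_cases hk1 : k = 1
        · have : j ≠ 1 := by omega
          simp [hk1, this]
        · have h2 : j ≠ k := by omega
          have h3 : j ≠ k - 1 := by omega
          simp [hk1, h2, h3]
      rw [h1, mul_zero]
    rw [hsplit, hrest, hajj, if_neg hj1]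
    by_cases h : j = 1 <;> simp only [h, if_true, if_false] <;> ring


/-- For every GT-pattern `P ∈ GT(λ+ρ)` of rank `r`,
`(L_1 + wgt_1(P), …, L_r + wgt_r(P)) = Σ_{i=1}^r k_i(P) α_i`, where
`α_1 = 2e_1` and `α_i = e_i − e_{i−1}`.  Equivalently,
`k_i(P) = Σ_{j=i}^r (wgt_j(P) + L_j)` for `2 ≤ i ≤ r`, and
`2 k_1(P) = Σ_{j=1}^r (wgt_j(P) + L_j)`. -/
theorem gt_weight_k_relation (r : ℕ) (hr : 1 ≤ r) (l : ℕ → ℕ) (P : GTPattern r l) :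
    (∀ j, 1 ≤ j → j ≤ r →
      (Lfun l j : ℤ) + P.wgt j = ∑ i ∈ Finset.Icc 1 r, P.kcoord i * alphaC i j) ∧
    (∀ i, 2 ≤ i → i ≤ r →
      P.kcoord i = ∑ j ∈ Finset.Icc i r, (P.wgt j + (Lfun l j : ℤ))) ∧
    2 * P.kcoord 1 = ∑ j ∈ Finset.Icc 1 r, (P.wgt j + (Lfun l j : ℤ)) := by
  classical
  have h2 : ∀ i, 2 ≤ i → i ≤ r →
      P.kcoord i = ∑ j ∈ Finset.Icc i r, (P.wgt j + (Lfun l j : ℤ)) := by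
    intro i hi hir
    rw [gt_S_eq P i (by omega) hir, GTPattern.kcoord, if_neg (by omega)]
    simp only [Finset.sum_sub_distrib]
    ring
  have h3 : 2 * P.kcoord 1 = ∑ j ∈ Finset.Icc 1 r, (P.wgt j + (Lfun l j : ℤ)) := by
    rw [gt_S_eq P 1 le_rfl hr, GTPattern.kcoord, if_pos rfl]
    have hN : r + 1 - 1 = r := by omega
    rw [hN, gt_sa_r, ← gt_sa_zero]
    simp only [Finset.sum_sub_distrib]
    ring
  have hsplit : ∀ j0, j0 ≤ r → ∑ m ∈ Finset.Icc j0 r, (P.wgt m + (Lfun l m : ℤ))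
      = (P.wgt j0 + (Lfun l j0 : ℤ))
        + ∑ m ∈ Finset.Icc (j0 + 1) r, (P.wgt m + (Lfun l m : ℤ)) := by
    intro j0 hj0
    rw [Icc_split_bot hj0, Finset.sum_insert (by simp only [Finset.mem_Icc, not_and]; omega)]
  refine ⟨?_, h2, h3⟩
  intro j hj hjr
  rw [alphaC_sum r P.kcoord j hj hjr]
  by_cases hj1 : j = 1
  · subst hj1
    rw [if_pos rfl]
    by_cases h1r : 1 + 1 ≤ r
    · rw [if_pos h1r, h3, h2 2 le_rfl (by omega), hsplit 1 hr, show (1 : ℕ) + 1 = 2 from rfl]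
      ring
    · rw [if_neg h1r, h3]
      have hr1 : r = 1 := by omega
      subst hr1
      simp only [Finset.Icc_self, Finset.sum_singleton, sub_zero]
      ring
  · rw [if_neg hj1]
    have hj2 : 2 ≤ j := by omega
    rw [h2 j hj2 hjr]
    by_cases hjlt : j + 1 ≤ r
    · rw [if_pos hjlt, h2 (j + 1) (by omega) hjlt, hsplit j hjr]
      ring
    · rw [if_neg hjlt]
      have hjr' : j = r := by omega
      subst hjr'
      simp only [Finset.Icc_self, Finset.sum_singleton, sub_zero]
      ring
end

section
/- For every GT-pattern P ∈ GT(λ+ρ) of rank r, the integers k_1(P), k_2(P), …, k_r(P) are all nonnegative. -/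
private lemma tele_Icc (f : ℕ → ℤ) (n : ℕ) :
    ∑ m ∈ Finset.Icc 1 n, (f (m - 1) - f m) = f 0 - f n := by
  induction n with
  | zero => simp
  | succ n ih =>
    rw [Finset.sum_Icc_succ_top (by omega : 1 ≤ n + 1), ih, Nat.add_sub_cancel]
    ring

/-- For every GT-pattern `P ∈ GT(λ+ρ)` of rank `r`, the
integers `k_1(P), …, k_r(P)` are all nonnegative. -/
theorem gt_kcoord_nonneg (r : ℕ) (hr : 1 ≤ r) (l : ℕ → ℕ) (P : GTPattern r l) :
    ∀ i, 1 ≤ i → i ≤ r → 0 ≤ P.kcoord i := by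
  have sar : P.sa r = 0 := by
    unfold GTPattern.sa
    rw [Finset.Icc_eq_empty (by omega)]
    simp
  intro i hi1 hir
  unfold GTPattern.kcoord
  by_cases h1 : i = 1
  · rw [if_pos h1]
    have hc : ∀ m ∈ Finset.Icc 1 r,
        P.sb m - P.sa m = (P.sa (m - 1) - P.sa m) - (P.sa (m - 1) - P.sb m) :=
      fun m _ => by ring
    rw [Finset.sum_congr rfl hc, Finset.sum_sub_distrib,
      tele_Icc (fun t => P.sa t) r, sar]
    have h2 : P.sa 0 - ((P.sa 0 - 0) - ∑ m ∈ Finset.Icc 1 r, (P.sa (m - 1) - P.sb m))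
        = ∑ m ∈ Finset.Icc 1 r, (P.sa (m - 1) - P.sb m) := by ring
    rw [h2]
    apply Finset.sum_nonneg
    intro m hm
    rw [Finset.mem_Icc] at hm
    have hm1 : m - 1 + 1 = m := by omega
    have hsa : P.sa (m - 1) = ∑ j ∈ Finset.Icc m r, (P.a (m - 1) j : ℤ) := by
      unfold GTPattern.sa
      rw [hm1]
    rw [hsa]
    unfold GTPattern.sb
    rw [← Finset.sum_sub_distrib]
    apply Finset.sum_nonneg
    intro j hj
    rw [Finset.mem_Icc] at hj
    have := P.b_le_a_above m j hm.1 hj.1 hj.2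
    simp only [sub_nonneg]
    exact_mod_cast this
  · rw [if_neg h1]
    have h2i : 2 ≤ i := by omega
    set R := r + 1 - i with hRdef
    have hR1 : 1 ≤ R := by omega
    have hRr : R + 1 ≤ r := by omega
    have hsplitA : ∀ t, t ≤ R → P.sa t =
        (∑ j ∈ Finset.Ioc t R, (P.a t j : ℤ)) + ∑ j ∈ Finset.Ioc R r, (P.a t j : ℤ) := by
      intro t ht
      unfold GTPattern.sa
      rw [Finset.Icc_add_one_left_eq_Ioc, ← Finset.sum_Ioc_consecutive _ ht (by omega : R ≤ r)]
    have hsplitB : ∀ m, 1 ≤ m → m ≤ R → P.sb m =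
        (∑ j ∈ Finset.Ioc (m - 1) R, (P.b m j : ℤ)) + ∑ j ∈ Finset.Ioc R r, (P.b m j : ℤ) := by
      intro m hm1 hmR
      unfold GTPattern.sb
      have hIcc : Finset.Icc m r = Finset.Ioc (m - 1) r := by
        rw [← Finset.Icc_add_one_left_eq_Ioc]
        congr 1
        omega
      rw [hIcc, ← Finset.sum_Ioc_consecutive _ (by omega : m - 1 ≤ R) (by omega : R ≤ r)]
    have hE : ∀ m ∈ Finset.Icc 1 R,
        2 * (∑ j ∈ Finset.Ioc (m - 1) R, ((P.a (m - 1) j : ℤ) - P.b m j))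
          + ∑ j ∈ Finset.Ioc R r, (((P.a (m - 1) j : ℤ) - P.b m j) + ((P.a m j : ℤ) - P.b m j))
        = ((P.sa (m - 1) + ∑ j ∈ Finset.Ioc (m - 1) R, (P.a (m - 1) j : ℤ))
            - (P.sa m + ∑ j ∈ Finset.Ioc m R, (P.a m j : ℤ)))
          + 2 * (P.sa m - P.sb m) := by
      intro m hm
      rw [Finset.mem_Icc] at hm
      have e1 := hsplitA (m - 1) (by omega)
      have e2 := hsplitA m hm.2
      have e3 := hsplitB m hm.1 hm.2
      have d1 : ∑ j ∈ Finset.Ioc (m - 1) R, ((P.a (m - 1) j : ℤ) - P.b m j)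
          = (∑ j ∈ Finset.Ioc (m - 1) R, (P.a (m - 1) j : ℤ))
            - ∑ j ∈ Finset.Ioc (m - 1) R, (P.b m j : ℤ) := Finset.sum_sub_distrib _ _
      have d2 : ∑ j ∈ Finset.Ioc R r, (((P.a (m - 1) j : ℤ) - P.b m j) + ((P.a m j : ℤ) - P.b m j))
          = ((∑ j ∈ Finset.Ioc R r, (P.a (m - 1) j : ℤ)) - ∑ j ∈ Finset.Ioc R r, (P.b m j : ℤ))
            + ((∑ j ∈ Finset.Ioc R r, (P.a m j : ℤ)) - ∑ j ∈ Finset.Ioc R r, (P.b m j : ℤ)) := by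
        rw [Finset.sum_add_distrib, Finset.sum_sub_distrib, Finset.sum_sub_distrib]
      rw [d1, d2]
      linarith [e1, e2, e3]
    have htel : ∑ m ∈ Finset.Icc 1 R,
          ((P.sa (m - 1) + ∑ j ∈ Finset.Ioc (m - 1) R, (P.a (m - 1) j : ℤ))
            - (P.sa m + ∑ j ∈ Finset.Ioc m R, (P.a m j : ℤ)))
        = (P.sa 0 + ∑ j ∈ Finset.Ioc 0 R, (P.a 0 j : ℤ))
          - (P.sa R + ∑ j ∈ Finset.Ioc R R, (P.a R j : ℤ)) :=
      tele_Icc (fun t => P.sa t + ∑ j ∈ Finset.Ioc t R, (P.a t j : ℤ)) R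
    have hIoc0 : ∑ j ∈ Finset.Ioc 0 R, (P.a 0 j : ℤ) = ∑ m ∈ Finset.Icc 1 R, (P.a 0 m : ℤ) := by
      congr 1
    have hIocRR : ∑ j ∈ Finset.Ioc R R, (P.a R j : ℤ) = 0 := by simp
    have hsum1 : ∑ m ∈ Finset.Icc 1 R, (P.sb m - P.sa m)
        = (∑ m ∈ Finset.Icc 1 R, P.sb m) - ∑ m ∈ Finset.Icc 1 R, P.sa m :=
      Finset.sum_sub_distrib _ _
    have hsum3 : ∑ m ∈ Finset.Icc 1 R, (2 * (P.sa m - P.sb m))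
        = 2 * ((∑ m ∈ Finset.Icc 1 R, P.sa m) - ∑ m ∈ Finset.Icc 1 R, P.sb m) := by
      rw [← Finset.mul_sum, Finset.sum_sub_distrib]
    have hXE : ∑ m ∈ Finset.Icc 1 R,
          (2 * (∑ j ∈ Finset.Ioc (m - 1) R, ((P.a (m - 1) j : ℤ) - P.b m j))
            + ∑ j ∈ Finset.Ioc R r, (((P.a (m - 1) j : ℤ) - P.b m j) + ((P.a m j : ℤ) - P.b m j)))
        = P.sa 0 - 2 * ∑ m ∈ Finset.Icc 1 R, (P.sb m - P.sa m) - P.sa R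
          + ∑ m ∈ Finset.Icc 1 R, (P.a 0 m : ℤ) := by
      rw [Finset.sum_congr rfl hE, Finset.sum_add_distrib, htel, hsum3]
      linarith [hIoc0, hIocRR, hsum1]
    rw [← hXE]
    apply Finset.sum_nonneg
    intro m hm
    rw [Finset.mem_Icc] at hm
    apply add_nonneg
    · apply mul_nonneg (by norm_num)
      apply Finset.sum_nonneg
      intro j hj
      rw [Finset.mem_Ioc] at hj
      have := P.b_le_a_above m j hm.1 (by omega) (by omega)
      simp only [sub_nonneg]
      exact_mod_cast this
    · apply Finset.sum_nonneg
      intro j hj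
      rw [Finset.mem_Ioc] at hj
      apply add_nonneg
      · have := P.b_le_a_above m j hm.1 (by omega) (by omega)
        simp only [sub_nonneg]
        exact_mod_cast this
      · have := P.b_le_a_below m j hm.1 (by omega) (by omega) (by omega)
        simp only [sub_nonneg]
        exact_mod_cast this
end

section
/- Let P ∈ GT(λ+ρ) be a stable GT-pattern of rank r with associated signed permutation w = (σ, ε) ∈ W(C_r) (the unique w with w(λ+ρ) = −(wgt_1(P), …, wgt_r(P))). Then for each 1 ≤ i ≤ r, the set of entries of row a_{r−i} of P equals {L_{σ^{−1}(1)}, L_{σ^{−1}(2)}, …, L_{σ^{−1}(i)}}. -/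
namespace GTPattern

variable {r : ℕ} {l : ℕ → ℕ} (P : GTPattern r l)

lemma a_strictAntiOn (hP : P.Strict) {i m m' : ℕ}
    (hm : i + 1 ≤ m) (hmm : m < m') (hm' : m' ≤ r) : P.a i m' < P.a i m := by
  have hi : i < r := by omega
  induction m', hmm using Nat.le_induction with
  | base => exact hP.1 i m hi hm (by omega)
  | succ n hn ih =>
    have h1 : P.a i (n + 1) < P.a i n := hP.1 i n hi (by omega) (by omega)
    exact lt_trans h1 (ih (by omega))

lemma b_strictAntiOn (hP : P.Strict) {i m m' : ℕ} (hi : 1 ≤ i)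
    (hm : i ≤ m) (hmm : m < m') (hm' : m' ≤ r) : P.b i m' < P.b i m := by
  induction m', hmm using Nat.le_induction with
  | base => exact hP.2 i m hi hm (by omega)
  | succ n hn ih =>
    have h1 : P.b i (n + 1) < P.b i n := hP.2 i n hi (by omega) (by omega)
    exact lt_trans h1 (ih (by omega))

lemma a_injOn (hP : P.Strict) (i : ℕ) :
    Set.InjOn (P.a i) (Finset.Icc (i + 1) r : Set ℕ) := by
  intro m hm m' hm' h
  simp only [Finset.coe_Icc, Set.mem_Icc] at hm hm'
  by_contra hne
  rcases Nat.lt_or_ge m m' with h1 | h1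
  · exact absurd h (ne_of_gt (P.a_strictAntiOn hP hm.1 h1 hm'.2))
  · have h2 : m' < m := by omega
    exact absurd h (ne_of_gt (P.a_strictAntiOn hP hm'.1 h2 hm.2)).symm

lemma b_injOn (hP : P.Strict) {i : ℕ} (hi : 1 ≤ i) :
    Set.InjOn (P.b i) (Finset.Icc i r : Set ℕ) := by
  intro m hm m' hm' h
  simp only [Finset.coe_Icc, Set.mem_Icc] at hm hm'
  by_contra hne
  rcases Nat.lt_or_ge m m' with h1 | h1
  · exact absurd h (ne_of_gt (P.b_strictAntiOn hP hi hm.1 h1 hm'.2))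
  · have h2 : m' < m := by omega
    exact absurd h (ne_of_gt (P.b_strictAntiOn hP hi hm'.1 h2 hm.2)).symm

/-- The set of entries of row `b i`. -/
def rowB (i : ℕ) : Finset ℕ := (Finset.Icc i r).image (P.b i)

lemma card_rowA (hP : P.Strict) {i : ℕ} (hi : i ≤ r) : (P.rowA i).card = r - i := by
  rw [rowA, Finset.card_image_of_injOn (P.a_injOn hP i), Nat.card_Icc]
  omega

lemma card_rowB (hP : P.Strict) {i : ℕ} (hi : 1 ≤ i) (hir : i ≤ r) :
    (P.rowB i).card = r - i + 1 := by
  rw [rowB, Finset.card_image_of_injOn (P.b_injOn hP hi), Nat.card_Icc]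
  omega

lemma sa_eq_sum (hP : P.Strict) (i : ℕ) :
    P.sa i = ∑ v ∈ P.rowA i, (v : ℤ) := by
  rw [rowA, Finset.sum_image (fun x hx y hy h => P.a_injOn hP i (by simpa using hx) (by simpa using hy) h)]
  rfl

lemma sb_eq_sum (hP : P.Strict) {i : ℕ} (hi : 1 ≤ i) :
    P.sb i = ∑ v ∈ P.rowB i, (v : ℤ) := by
  rw [rowB, Finset.sum_image (fun x hx y hy h => P.b_injOn hP hi (by simpa using hx) (by simpa using hy) h)]
  rfl

end GTPattern
lemma subset_erase_exists {s t : Finset ℕ} (hst : s ⊆ t) (hc : s.card + 1 = t.card) :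
    ∃ x ∈ t, x ∉ s ∧ s = t.erase x := by
  have hcard : (t \ s).card = 1 := by
    rw [Finset.card_sdiff_of_subset hst]; omega
  obtain ⟨x, hx⟩ := Finset.card_eq_one.mp hcard
  have hxt : x ∈ t \ s := by rw [hx]; exact Finset.mem_singleton_self x
  rw [Finset.mem_sdiff] at hxt
  refine ⟨x, hxt.1, hxt.2, ?_⟩
  ext y
  simp only [Finset.mem_erase]
  constructor
  · intro hy
    refine ⟨fun hyx => hxt.2 (hyx ▸ hy), hst hy⟩
  · rintro ⟨hyx, hyt⟩
    by_contra hys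
    have : y ∈ t \ s := Finset.mem_sdiff.mpr ⟨hyt, hys⟩
    rw [hx, Finset.mem_singleton] at this
    exact hyx this

namespace GTPattern

variable {r : ℕ} {l : ℕ → ℕ} (P : GTPattern r l)

lemma rowB_subset (hP : P.Stable) {i : ℕ} (hi : 1 ≤ i) (hir : i ≤ r) :
    P.rowB i ⊆ insert 0 (P.rowA (i - 1)) := by
  intro v hv
  rw [rowB, Finset.mem_image] at hv
  obtain ⟨j, hj, rfl⟩ := hv
  rw [Finset.mem_Icc] at hj
  have hidx : i - 1 + 1 = i := by omega
  rcases hP.2.1 i j hi hj.1 hj.2 with hmin | hmax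
  · rw [hmin]
    exact Finset.mem_insert_of_mem (by
      rw [rowA, Finset.mem_image]
      exact ⟨j, Finset.mem_Icc.mpr (by omega), rfl⟩)
  · rcases hmax with ⟨hjr, hb⟩ | ⟨hjr, hb⟩
    · rw [hb]
      exact Finset.mem_insert_of_mem (by
        rw [rowA, Finset.mem_image]
        exact ⟨j + 1, Finset.mem_Icc.mpr (by omega), rfl⟩)
    · rw [hjr, hb]; exact Finset.mem_insert_self 0 _

lemma rowA_subset_rowB (hP : P.Stable) {i : ℕ} (hi : 1 ≤ i) :
    P.rowA i ⊆ P.rowB i := by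
  intro v hv
  rw [rowA, Finset.mem_image] at hv
  obtain ⟨j, hj, rfl⟩ := hv
  rw [Finset.mem_Icc] at hj
  have hiltr : i < r := by omega
  rcases hP.2.2 i j hi hiltr hj.1 hj.2 with hmin | hmax
  · rw [hmin, rowB, Finset.mem_image]
    exact ⟨j, Finset.mem_Icc.mpr (by omega), rfl⟩
  · rw [hmax, rowB, Finset.mem_image]
    exact ⟨j - 1, Finset.mem_Icc.mpr (by omega), rfl⟩

lemma zero_mem_rowB (hP : P.Strict) {i : ℕ} (hi : 1 ≤ i) (h0 : 0 ∈ P.rowB i) :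
    P.b i r = 0 := by
  rw [rowB, Finset.mem_image] at h0
  obtain ⟨j, hj, hbj⟩ := h0
  rw [Finset.mem_Icc] at hj
  rcases Nat.eq_or_lt_of_le hj.2 with h | h
  · rwa [h] at hbj
  · have := P.b_strictAntiOn hP hi hj.1 h le_rfl
    omega

lemma zero_mem_rowA (hP : P.Strict) {i : ℕ} (h0 : 0 ∈ P.rowA i) :
    P.a i r = 0 := by
  rw [rowA, Finset.mem_image] at h0
  obtain ⟨j, hj, haj⟩ := h0
  rw [Finset.mem_Icc] at hj
  rcases Nat.eq_or_lt_of_le hj.2 with h | h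
  · rwa [h] at haj
  · have := P.a_strictAntiOn hP hj.1 h le_rfl
    omega

lemma level_b (hP : P.Stable) {i : ℕ} (hi : 1 ≤ i) (hir : i ≤ r)
    (h0 : 0 ∉ P.rowA (i - 1)) :
    ∃ x ∈ insert 0 (P.rowA (i - 1)), x ∉ P.rowB i ∧
      P.rowB i = (insert 0 (P.rowA (i - 1))).erase x := by
  apply subset_erase_exists (P.rowB_subset hP hi hir)
  rw [Finset.card_insert_of_notMem h0, P.card_rowB hP.1 hi hir, P.card_rowA hP.1 (by omega)]
  omega

lemma level_a (hP : P.Stable) {i : ℕ} (hi : 1 ≤ i) (hir : i ≤ r) :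
    ∃ y ∈ P.rowB i, P.rowA i = (P.rowB i).erase y := by
  obtain ⟨y, hy, _, h⟩ := subset_erase_exists (P.rowA_subset_rowB hP hi)
    (by rw [P.card_rowB hP.1 hi hir, P.card_rowA hP.1 (by omega)])
  exact ⟨y, hy, h⟩

end GTPattern
lemma Lfun_pos (l : ℕ → ℕ) (k : ℕ) : 1 ≤ Lfun l (k + 1) := by
  rw [Lfun]; omega

lemma Lfun_strictMono (l : ℕ → ℕ) : StrictMono (Lfun l) := by
  intro m m' h
  rw [Lfun, Lfun]
  have : ∑ t ∈ Finset.Icc 1 m, l t ≤ ∑ t ∈ Finset.Icc 1 m', l t :=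
    Finset.sum_le_sum_of_subset (Finset.Icc_subset_Icc_right (by omega))
  omega

namespace GTPattern

variable {r : ℕ} {l : ℕ → ℕ} (P : GTPattern r l)

lemma wgt_level {i : ℕ} (hi : 1 ≤ i) (hir : i ≤ r) :
    P.wgt (r + 1 - i) = P.sa (i - 1) - 2 * P.sb i + P.sa i := by
  have h1 : r - (r + 1 - i) = i - 1 := by omega
  have h2 : r + 1 - (r + 1 - i) = i := by omega
  rw [wgt, h1, h2]

end GTPattern
namespace GTPattern

variable {r : ℕ} {l : ℕ → ℕ} (P : GTPattern r l)

lemma hw_ne_zero {σ : Equiv.Perm (Fin r)} {ε : Fin r → ℤˣ}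
    (hw : ∀ j : Fin r,
      (ε j : ℤ) * (Lfun l ((σ⁻¹ j).1 + 1) : ℤ) = - P.wgt (j.1 + 1))
    (j : Fin r) : P.wgt (j.1 + 1) ≠ 0 := by
  intro h
  have h2 := hw j
  rw [h, neg_zero, mul_eq_zero] at h2
  rcases h2 with h2 | h2
  · exact (ε j).ne_zero h2
  · have := Lfun_pos l ((σ⁻¹ j).1)
    rw [Nat.cast_eq_zero] at h2
    omega

lemma sa_last (hr : 1 ≤ r) : P.sa (r - 1) = (P.a (r - 1) r : ℤ) := by
  have h : r - 1 + 1 = r := by omega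
  rw [sa, h, Finset.Icc_self, Finset.sum_singleton]

lemma sa_r : P.sa r = 0 := by
  rw [sa, Finset.Icc_eq_empty (by omega), Finset.sum_empty]

lemma no_zero (hr : 1 ≤ r) (hP : P.Stable)
    {σ : Equiv.Perm (Fin r)} {ε : Fin r → ℤˣ}
    (hw : ∀ j : Fin r,
      (ε j : ℤ) * (Lfun l ((σ⁻¹ j).1 + 1) : ℤ) = - P.wgt (j.1 + 1)) :
    ∀ n i', i' + n + 1 = r → P.a i' r = 0 → False := by
  intro n
  induction n with
  | zero =>
    intro i' hi' ha
    have hi'' : i' = r - 1 := by omega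
    subst hi''
    have hbrr : P.b r r = 0 := by
      have := P.b_le_a_above r r hr le_rfl le_rfl
      have h : r - 1 = r - 1 := rfl
      omega
    have hsb : P.sb r = 0 := by
      rw [sb, Finset.Icc_self, Finset.sum_singleton, hbrr, Nat.cast_zero]
    have hwgt : P.wgt 1 = 0 := by
      have h := P.wgt_level (i := r) hr le_rfl
      have h2 : r + 1 - r = 1 := by omega
      rw [h2] at h
      have h3 : r - 1 = r - 1 := rfl
      rw [h, P.sa_last hr, ha, hsb, P.sa_r]
      ring
    exact P.hw_ne_zero hw ⟨0, hr⟩ hwgt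
  | succ n ih =>
    intro i' hi' ha
    set i₁ := i' + 1 with hi₁def
    have hi₁ : 1 ≤ i₁ := by omega
    have hi₁r : i₁ ≤ r := by omega
    have hi₁ltr : i₁ < r := by omega
    -- 0 is in row a i'
    have h0mem : 0 ∈ P.rowA i' := by
      rw [rowA, Finset.mem_image]
      exact ⟨r, Finset.mem_Icc.mpr (by omega), ha⟩
    -- rowB i₁ = rowA i'
    have hBsub : P.rowB i₁ ⊆ P.rowA i' := by
      have h := P.rowB_subset hP hi₁ hi₁r
      have h2 : i₁ - 1 = i' := by omega
      rw [h2, Finset.insert_eq_self.mpr h0mem] at h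
      exact h
    have hBeq : P.rowB i₁ = P.rowA i' := by
      apply Finset.eq_of_subset_of_card_le hBsub
      rw [P.card_rowB hP.1 hi₁ hi₁r, P.card_rowA hP.1 (by omega)]
      omega
    have hsb : P.sb i₁ = P.sa i' := by
      rw [P.sb_eq_sum hP.1 hi₁, P.sa_eq_sum hP.1 i', hBeq]
    obtain ⟨y, hy, hA⟩ := P.level_a hP hi₁ hi₁r
    have hsa : P.sa i₁ = P.sb i₁ - (y : ℤ) := by
      rw [P.sa_eq_sum hP.1 i₁, P.sb_eq_sum hP.1 hi₁, hA,
        Finset.sum_erase_eq_sub hy]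
    -- the weight at this level
    set j₀ : Fin r := ⟨r - i₁, by omega⟩ with hj₀def
    have hwj := hw j₀
    have hj₀1 : j₀.1 + 1 = r + 1 - i₁ := by
      simp only [hj₀def]; omega
    rw [hj₀1, P.wgt_level hi₁ hi₁r] at hwj
    have h2 : i₁ - 1 = i' := by omega
    rw [h2, hsa, hsb] at hwj
    -- hwj : ε j₀ * L = -(sa i' - 2 sa i' + (sa i' - y)) = y
    have hwy : (ε j₀ : ℤ) * (Lfun l ((σ⁻¹ j₀).1 + 1) : ℤ) = (y : ℤ) := by
      rw [hwj]; ring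
    -- y ≠ 0
    have hyne : y ≠ 0 := by
      intro h
      subst h
      rw [Nat.cast_zero, mul_eq_zero] at hwy
      rcases hwy with h | h
      · exact (ε j₀).ne_zero h
      · have := Lfun_pos l ((σ⁻¹ j₀).1)
        rw [Nat.cast_eq_zero] at h
        omega
    -- so 0 survives into row a i₁
    have h0A : 0 ∈ P.rowA i₁ := by
      rw [hA, Finset.mem_erase]
      exact ⟨Ne.symm hyne, by rw [hBeq]; exact h0mem⟩
    exact ih i₁ (by omega) (P.zero_mem_rowA hP.1 h0A)

end GTPattern
namespace GTPattern

variable {r : ℕ} {l : ℕ → ℕ} (P : GTPattern r l)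

lemma f_injective (l : ℕ → ℕ) (σ : Equiv.Perm (Fin r)) :
    Function.Injective (fun j : Fin r => Lfun l ((σ⁻¹ j).1 + 1)) := by
  intro j j' h
  simp only at h
  have h2 := (Lfun_strictMono l).injective h
  have h3 : (σ⁻¹ j) = σ⁻¹ j' := by
    apply Fin.ext; omega
  simpa using congrArg σ h3

lemma key (hr : 1 ≤ r) (hP : P.Stable)
    {σ : Equiv.Perm (Fin r)} {ε : Fin r → ℤˣ}
    (hw : ∀ j : Fin r,
      (ε j : ℤ) * (Lfun l ((σ⁻¹ j).1 + 1) : ℤ) = - P.wgt (j.1 + 1)) :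
    ∀ i, i ≤ r → P.rowA i =
      (Finset.univ.filter (fun j : Fin r => j.1 + 1 ≤ r - i)).image
        (fun j => Lfun l ((σ⁻¹ j).1 + 1)) := by
  intro i
  induction i with
  | zero =>
    intro _
    ext v
    simp only [rowA, Finset.mem_image, Finset.mem_Icc, Finset.mem_filter,
      Finset.mem_univ, true_and, Nat.sub_zero]
    constructor
    · rintro ⟨j, ⟨hj1, hj2⟩, rfl⟩
      refine ⟨σ ⟨r - j, by omega⟩, by omega, ?_⟩
      rw [P.top j hj1 hj2]
      simp only [Equiv.Perm.inv_def, Equiv.symm_apply_apply]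
      congr 1
      omega
    · rintro ⟨j, _, rfl⟩
      have hm : (σ⁻¹ j).1 + 1 ≤ r := by omega
      refine ⟨r + 1 - ((σ⁻¹ j).1 + 1), ⟨by omega, by omega⟩, ?_⟩
      rw [P.top _ (by omega) (by omega)]
      congr 1
      omega
  | succ i ih =>
    intro hir
    have hi : i ≤ r := by omega
    have ihe := ih hi
    set f : Fin r → ℕ := fun j => Lfun l ((σ⁻¹ j).1 + 1) with hf
    -- 0 not in rowA i
    have h0 : 0 ∉ P.rowA i := by
      rw [ihe]
      intro h
      rw [Finset.mem_image] at h
      obtain ⟨j, _, hj⟩ := h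
      have := Lfun_pos l ((σ⁻¹ j).1)
      simp only [hf] at hj
      omega
    set i₁ := i + 1 with hi₁def
    have hi₁ : 1 ≤ i₁ := by omega
    have hi₁r : i₁ ≤ r := hir
    have hsub : i₁ - 1 = i := by omega
    obtain ⟨x, hx, hxB, hB⟩ := P.level_b hP hi₁ hi₁r (by rw [hsub]; exact h0)
    rw [hsub] at hx hB
    obtain ⟨y, hy, hA⟩ := P.level_a hP hi₁ hi₁r
    have hsb : P.sb i₁ = P.sa i - (x : ℤ) := by
      rw [P.sb_eq_sum hP.1 hi₁, hB, Finset.sum_erase_eq_sub hx,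
        Finset.sum_insert h0, Nat.cast_zero, zero_add, ← P.sa_eq_sum hP.1 i]
    have hsa : P.sa i₁ = P.sb i₁ - (y : ℤ) := by
      rw [P.sa_eq_sum hP.1 i₁, P.sb_eq_sum hP.1 hi₁, hA,
        Finset.sum_erase_eq_sub hy]
    set j₀ : Fin r := ⟨r - i₁, by omega⟩ with hj₀def
    have hwj := hw j₀
    have hj₀1 : j₀.1 + 1 = r + 1 - i₁ := by
      simp only [hj₀def]; omega
    rw [hj₀1, P.wgt_level hi₁ hi₁r, hsub, hsa, hsb] at hwj
    have hwxy : (ε j₀ : ℤ) * (f j₀ : ℤ) = (y : ℤ) - (x : ℤ) := by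
      rw [hf]; rw [hwj]; ring
    have hLpos : 1 ≤ f j₀ := Lfun_pos l _
    have hεval := Int.units_eq_one_or (ε j₀)
    -- main claim: rowA i₁ = (rowA i).erase (f j₀)
    have hmain : P.rowA i₁ = (P.rowA i).erase (f j₀) := by
      by_cases hx0 : x = 0
      · by_cases hy0 : y = 0
        · exfalso
          rw [hx0, hy0] at hwxy
          rcases hεval with h | h <;>
            rw [h] at hwxy <;>
            simp only [Units.val_one, Units.val_neg] at hwxy <;>
            omega
        · -- x = 0, y = f j₀
          have hyL : y = f j₀ := by
            rw [hx0] at hwxy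
            rcases hεval with h | h <;>
              rw [h] at hwxy <;>
              simp only [Units.val_one, Units.val_neg] at hwxy <;>
              omega
          rw [hA, hB, hx0, Finset.erase_insert h0, hyL]
      · by_cases hy0 : y = 0
        · -- y = 0, x = f j₀
          have hxL : x = f j₀ := by
            rw [hy0] at hwxy
            rcases hεval with h | h <;>
              rw [h] at hwxy <;>
              simp only [Units.val_one, Units.val_neg] at hwxy <;>
              omega
          have hB2 : P.rowB i₁ = insert 0 ((P.rowA i).erase x) := by
            rw [hB, Finset.erase_insert_of_ne (Ne.symm hx0)]
          rw [hA, hy0, hB2, Finset.erase_insert (by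
            rw [Finset.mem_erase]; rintro ⟨-, h⟩; exact h0 h), hxL]
        · -- both nonzero: contradiction via no_zero
          exfalso
          have h0B : 0 ∈ P.rowB i₁ := by
            rw [hB, Finset.mem_erase]
            exact ⟨Ne.symm hx0, Finset.mem_insert_self 0 _⟩
          have h0A : 0 ∈ P.rowA i₁ := by
            rw [hA, Finset.mem_erase]
            exact ⟨Ne.symm hy0, h0B⟩
          rcases Nat.lt_or_ge i₁ r with hlt | hge
          · exact P.no_zero hr hP hw (r - i₁ - 1) i₁ (by omega)
              (P.zero_mem_rowA hP.1 h0A)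
          · have : P.rowA i₁ = ∅ := by
              rw [rowA, Finset.Icc_eq_empty (by omega), Finset.image_empty]
            rw [this] at h0A
            exact absurd h0A (Finset.notMem_empty 0)
    -- convert to the filtered image form
    rw [hmain, ihe]
    have hj₀mem : j₀ ∈ Finset.univ.filter (fun j : Fin r => j.1 + 1 ≤ r - i) := by
      simp only [Finset.mem_filter, Finset.mem_univ, true_and, hj₀def]
      omega
    rw [← Finset.image_erase (f_injective l σ)]
    congr 1
    ext j
    simp only [Finset.mem_erase, Finset.mem_filter, Finset.mem_univ, true_and,
      Ne, Fin.ext_iff, hj₀def]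
    omega

end GTPattern

/-- Let `P ∈ GT(λ+ρ)` be a stable GT-pattern of rank `r` with
associated signed permutation `w = (σ, ε) ∈ W(C_r)`, i.e. the unique `w` with
`w(λ+ρ) = −(wgt_1(P), …, wgt_r(P))`.  Then for each `1 ≤ i ≤ r` the set of
entries of row `a_{r−i}` of `P` equals `{L_{σ⁻¹(1)}, …, L_{σ⁻¹(i)}}`.
(`Fin r` indexes `1, …, r` via `i ↦ i.1 + 1`.) -/
theorem gt_stable_rowA_entries (r : ℕ) (hr : 1 ≤ r) (l : ℕ → ℕ)
    (P : GTPattern r l) (hP : P.Stable)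
    (σ : Equiv.Perm (Fin r)) (ε : Fin r → ℤˣ)
    (hw : ∀ j : Fin r,
      (ε j : ℤ) * (Lfun l ((σ⁻¹ j).1 + 1) : ℤ) = - P.wgt (j.1 + 1)) :
    ∀ i : Fin r,
      P.rowA (r - (i.1 + 1))
        = (Finset.univ.filter (fun j : Fin r => j ≤ i)).image
            (fun j => Lfun l ((σ⁻¹ j).1 + 1)) := by

  intro i
  have hi1 : i.1 + 1 ≤ r := i.isLt
  have h := P.key hr hP hw (r - (i.1 + 1)) (by omega)
  rw [h]
  congr 1
  ext j
  simp only [Finset.mem_filter, Finset.mem_univ, true_and, Fin.le_def]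
  omega
end

section
/- Let P ∈ GT(λ+ρ) be a stable GT-pattern of rank r with associated signed permutation w = (σ, ε) ∈ W(C_r), and let m_i(P) denote the total number of maximal entries in rows b_{r+1−i} and a_{r+1−i} of P. Then m_i(P) = inv_i(w^{−1}) if ε^{(i)} = +1, and m_i(P) = i + pr_i(w^{−1}) if ε^{(i)} = −1, where inv_i(w^{−1}) = #{ j : j < i and σ^{−1}(j) > σ^{−1}(i) } and pr_i(w^{−1}) = #{ j : j < i and σ^{−1}(j) < σ^{−1}(i) }. -/
namespace BBFAux

open Finset

lemma Lfun_strictMono (l : ℕ → ℕ) : StrictMono (Lfun l) := by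
  apply strictMono_nat_of_lt_succ
  intro n
  unfold Lfun
  have h : (∑ t ∈ Finset.Icc 1 n, l t) ≤ ∑ t ∈ Finset.Icc 1 (n+1), l t :=
    Finset.sum_le_sum_of_subset (Finset.Icc_subset_Icc le_rfl (by omega))
  omega

lemma one_le_Lfun (l : ℕ → ℕ) (j : ℕ) (hj : 1 ≤ j) : 1 ≤ Lfun l j := by
  unfold Lfun; omega

lemma sum_split (f : ℕ → ℤ) {a c b : ℕ} (h1 : a ≤ c + 1) (h2 : c ≤ b) :
    ∑ q ∈ Finset.Icc a b, f q
      = (∑ q ∈ Finset.Icc a c, f q) + ∑ q ∈ Finset.Icc (c+1) b, f q := by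
  have hu : Finset.Icc a b = Finset.Icc a c ∪ Finset.Icc (c+1) b := by
    ext x; simp only [Finset.mem_Icc, Finset.mem_union]; omega
  rw [hu, Finset.sum_union]
  rw [Finset.disjoint_left]
  intro x hx hx'
  simp only [Finset.mem_Icc] at hx hx'
  omega

lemma sum_shift (f : ℕ → ℤ) (a b : ℕ) :
    ∑ q ∈ Finset.Icc a b, f (q+1) = ∑ q ∈ Finset.Icc (a+1) (b+1), f q := by
  rw [← Finset.map_add_right_Icc a b 1, Finset.sum_map]
  rfl

lemma upper_eq (S : Finset ℕ) (lo hi : ℕ) (hlo : 1 ≤ lo)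
    (hS : S ⊆ Finset.Icc lo hi)
    (hcl : ∀ j ∈ S, j + 1 ≤ hi → j + 1 ∈ S) :
    ∀ x, x ∈ S ↔ (hi - S.card < x ∧ x ≤ hi) := by
  rcases S.eq_empty_or_nonempty with h | h
  · subst h; intro x; simp
  · have hmem := S.min'_mem h
    set m := S.min' h with hm
    have hmlo : lo ≤ m ∧ m ≤ hi := by simpa using (hS hmem)
    have key : ∀ t, m + t ≤ hi → m + t ∈ S := by
      intro t
      induction t with
      | zero => intro _; simpa using hmem
      | succ k ih =>
        intro hk
        exact hcl (m + k) (ih (by omega)) (by omega)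
    have hSeq : S = Finset.Icc m hi := by
      apply Finset.Subset.antisymm
      · intro x hx
        have h1 := S.min'_le x hx
        have h2 := (Finset.mem_Icc.mp (hS hx)).2
        exact Finset.mem_Icc.mpr ⟨h1, h2⟩
      · intro x hx
        rw [Finset.mem_Icc] at hx
        have : x = m + (x - m) := by omega
        rw [this]; exact key _ (by omega)
    have hcard : (Finset.Icc m hi).card = hi + 1 - m := Nat.card_Icc _ _
    intro x
    rw [hSeq, Finset.mem_Icc, hcard]
    omega

lemma lower_eq (S : Finset ℕ) (lo hi : ℕ) (hlo : 1 ≤ lo)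
    (hS : S ⊆ Finset.Icc lo hi)
    (hcl : ∀ j ∈ S, lo + 1 ≤ j → j - 1 ∈ S) :
    ∀ x, x ∈ S ↔ (lo ≤ x ∧ x < lo + S.card) := by
  rcases S.eq_empty_or_nonempty with h | h
  · subst h; intro x; simp
  · have hmem := S.max'_mem h
    set M := S.max' h with hM
    have hMlo : lo ≤ M ∧ M ≤ hi := by simpa using (hS hmem)
    have key : ∀ t, lo ≤ M - t → M - t ∈ S := by
      intro t
      induction t with
      | zero => intro _; simpa using hmem
      | succ k ih =>
        intro hk
        have hk' : lo ≤ M - k := by omega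
        have := hcl (M - k) (ih hk') (by omega)
        have he : M - (k+1) = M - k - 1 := by omega
        rw [he]; exact this
    have hSeq : S = Finset.Icc lo M := by
      apply Finset.Subset.antisymm
      · intro x hx
        exact Finset.mem_Icc.mpr ⟨(Finset.mem_Icc.mp (hS hx)).1, S.le_max' x hx⟩
      · intro x hx
        rw [Finset.mem_Icc] at hx
        have : x = M - (M - x) := by omega
        rw [this]; exact key _ (by omega)
    have hcard : (Finset.Icc lo M).card = M + 1 - lo := Nat.card_Icc _ _
    intro x
    rw [hSeq, Finset.mem_Icc, hcard]
    omega

end BBFAux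

namespace BBFAux

variable {r : ℕ} {l : ℕ → ℕ}

open scoped Classical

/-- number of maximal entries in row `b (n+1)`. -/
noncomputable def mB (P : GTPattern r l) (n : ℕ) : ℕ :=
  ((Finset.Icc (n+1) r).filter (fun j => P.MaximalB (n+1) j)).card

/-- number of maximal entries in row `a (n+1)`. -/
noncomputable def mA (P : GTPattern r l) (n : ℕ) : ℕ :=
  ((Finset.Icc (n+2) r).filter (fun j => P.MaximalA (n+1) j)).card

/-- the value removed from row `a n` to row `b (n+1)` (or `0`). -/
noncomputable def Av (P : GTPattern r l) (n : ℕ) : ℕ := P.a n (r - mB P n + 1)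

/-- the value removed from row `b (n+1)` to row `a (n+1)`. -/
noncomputable def Bv (P : GTPattern r l) (n : ℕ) : ℕ := P.b (n+1) (n + 1 + mA P n)

lemma mB_le (P : GTPattern r l) (n : ℕ) (hn : n < r) : mB P n ≤ r - n := by
  have h := Finset.card_filter_le (Finset.Icc (n+1) r)
      (fun j => P.MaximalB (n+1) j)
  rw [Nat.card_Icc] at h
  unfold mB
  omega

lemma mA_le (P : GTPattern r l) (n : ℕ) (hn : n < r) : mA P n ≤ r - n - 1 := by
  have h := Finset.card_filter_le (Finset.Icc (n+2) r)
      (fun j => P.MaximalA (n+1) j)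
  rw [Nat.card_Icc] at h
  unfold mA
  omega

lemma b_row_eq (P : GTPattern r l) (hP : P.Stable) {n : ℕ} (hn : n < r)
    {q : ℕ} (h1 : n + 1 ≤ q) (h2 : q ≤ r) :
    P.b (n+1) q = if q ≤ r - mB P n then P.a n q else P.a n (q+1) := by
  have hmem := upper_eq ((Finset.Icc (n+1) r).filter (fun j => P.MaximalB (n+1) j))
    (n+1) r (by omega) (Finset.filter_subset _ _) ?cl
  case cl =>
    intro j hj hjr
    rw [Finset.mem_filter] at hj ⊢
    obtain ⟨hj1, hj2⟩ := hj
    rw [Finset.mem_Icc] at hj1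
    refine ⟨Finset.mem_Icc.mpr (by omega), ?_⟩
    rcases hj2 with ⟨hjlt, hjeq⟩ | ⟨hjr', _⟩
    · -- maximal at j with j < r, show maximal at j+1
      rcases hP.2.1 (n+1) (j+1) (by omega) (by omega) (by omega) with hmin | hmax
      · exfalso
        unfold GTPattern.MinimalB at hmin
        have hstr := hP.1.2 (n+1) j (by omega) (by omega) hjlt
        simp only [Nat.add_sub_cancel] at hmin hjeq
        omega
      · exact hmax
    · omega
  have hmB : mB P n = ((Finset.Icc (n+1) r).filter (fun j => P.MaximalB (n+1) j)).card := rfl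
  by_cases hq : q ≤ r - mB P n
  · rw [if_pos hq]
    have hnot : ¬ P.MaximalB (n+1) q := by
      intro hmax
      have : q ∈ (Finset.Icc (n+1) r).filter (fun j => P.MaximalB (n+1) j) :=
        Finset.mem_filter.mpr ⟨Finset.mem_Icc.mpr ⟨h1, h2⟩, hmax⟩
      rw [hmem q] at this
      omega
    rcases hP.2.1 (n+1) q (by omega) h1 h2 with hmin | hmax
    · unfold GTPattern.MinimalB at hmin
      simpa using hmin
    · exact absurd hmax hnot
  · rw [if_neg hq]
    have hmax : P.MaximalB (n+1) q := by
      have : q ∈ (Finset.Icc (n+1) r).filter (fun j => P.MaximalB (n+1) j) := by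
        rw [hmem q]; omega
      exact (Finset.mem_filter.mp this).2
    rcases hmax with ⟨hqlt, hqeq⟩ | ⟨hqr, hqeq⟩
    · simpa using hqeq
    · rw [hqr, hqeq]
      exact (P.a_zero n (r+1) (by omega)).symm

lemma a_row_eq (P : GTPattern r l) (hP : P.Stable) {n : ℕ} (hn : n + 1 < r)
    {p : ℕ} (h1 : n + 2 ≤ p) (h2 : p ≤ r) :
    P.a (n+1) p = if p ≤ n + 1 + mA P n then P.b (n+1) (p-1) else P.b (n+1) p := by
  have hmem := lower_eq ((Finset.Icc (n+2) r).filter (fun j => P.MaximalA (n+1) j))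
    (n+2) r (by omega) (Finset.filter_subset _ _) ?cl
  case cl =>
    intro j hj hjlo
    rw [Finset.mem_filter] at hj ⊢
    obtain ⟨hj1, hj2⟩ := hj
    rw [Finset.mem_Icc] at hj1
    refine ⟨Finset.mem_Icc.mpr (by omega), ?_⟩
    unfold GTPattern.MaximalA at hj2 ⊢
    rcases hP.2.2 (n+1) (j-1) (by omega) hn (by omega) (by omega) with hmin | hmax
    · exfalso
      unfold GTPattern.MinimalA at hmin
      have hstr := hP.1.1 (n+1) (j-1) hn (by omega) (by omega)
      have hj' : j - 1 + 1 = j := by omega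
      rw [hj'] at hstr
      omega
    · exact hmax
  have hmA : mA P n = ((Finset.Icc (n+2) r).filter (fun j => P.MaximalA (n+1) j)).card := rfl
  by_cases hq : p ≤ n + 1 + mA P n
  · rw [if_pos hq]
    have : p ∈ (Finset.Icc (n+2) r).filter (fun j => P.MaximalA (n+1) j) := by
      rw [hmem p]; omega
    exact (Finset.mem_filter.mp this).2
  · rw [if_neg hq]
    have hnot : ¬ P.MaximalA (n+1) p := by
      intro hmax
      have : p ∈ (Finset.Icc (n+2) r).filter (fun j => P.MaximalA (n+1) j) :=
        Finset.mem_filter.mpr ⟨Finset.mem_Icc.mpr ⟨h1, h2⟩, hmax⟩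
      rw [hmem p] at this
      omega
    rcases hP.2.2 (n+1) p (by omega) hn h1 h2 with hmin | hmax
    · exact hmin
    · exact absurd hmax hnot

end BBFAux

namespace BBFAux

variable {r : ℕ} {l : ℕ → ℕ}

open scoped Classical

lemma sb_eq (P : GTPattern r l) (hP : P.Stable) {n : ℕ} (hn : n < r) :
    P.sb (n+1) = P.sa n - (Av P n : ℤ) := by
  have hc := mB_le P n hn
  set c := r - mB P n with hcdef
  have hcn : n ≤ c ∧ c ≤ r := by omega
  have hrow : ∀ q ∈ Finset.Icc (n+1) r,
      (P.b (n+1) q : ℤ) = if q ≤ c then (P.a n q : ℤ) else (P.a n (q+1) : ℤ) := by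
    intro q hq
    rw [Finset.mem_Icc] at hq
    rw [b_row_eq P hP hn hq.1 hq.2]
    split <;> rfl
  have h1 : P.sb (n+1) = (∑ q ∈ Finset.Icc (n+1) c, (P.a n q : ℤ))
      + ∑ q ∈ Finset.Icc (c+1) r, (P.a n (q+1) : ℤ) := by
    unfold GTPattern.sb
    rw [Finset.sum_congr rfl hrow, sum_split _ (by omega) hcn.2]
    congr 1
    · exact Finset.sum_congr rfl
        (fun q hq => by rw [Finset.mem_Icc] at hq; rw [if_pos (by omega)])
    · exact Finset.sum_congr rfl
        (fun q hq => by rw [Finset.mem_Icc] at hq; rw [if_neg (by omega)])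
  have h2 : ∑ q ∈ Finset.Icc (c+1) r, (P.a n (q+1) : ℤ)
      = ∑ q ∈ Finset.Icc (c+2) (r+1), (P.a n q : ℤ) :=
    sum_shift (fun q => (P.a n q : ℤ)) (c+1) r
  have h3 : ∑ q ∈ Finset.Icc (c+1) (r+1), (P.a n q : ℤ)
      = (P.a n (c+1) : ℤ) + ∑ q ∈ Finset.Icc (c+2) (r+1), (P.a n q : ℤ) := by
    rw [sum_split (fun q => (P.a n q : ℤ)) (show c+1 ≤ c+1+1 by omega)
      (show c+1 ≤ r+1 by omega)]
    rw [Finset.Icc_self, Finset.sum_singleton]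
  have h4 : ∑ q ∈ Finset.Icc (c+1) (r+1), (P.a n q : ℤ)
      = (∑ q ∈ Finset.Icc (c+1) r, (P.a n q : ℤ)) + (P.a n (r+1) : ℤ) := by
    rw [sum_split (fun q => (P.a n q : ℤ)) (show c+1 ≤ r+1 by omega)
      (show r ≤ r+1 by omega)]
    rw [Finset.Icc_self, Finset.sum_singleton]
  have h5 : P.a n (r+1) = 0 := P.a_zero n (r+1) (by omega)
  have h6 : P.sa n = (∑ q ∈ Finset.Icc (n+1) c, (P.a n q : ℤ))
      + ∑ q ∈ Finset.Icc (c+1) r, (P.a n q : ℤ) := by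
    unfold GTPattern.sa
    exact sum_split _ (by omega) hcn.2
  have hAv : (Av P n : ℤ) = (P.a n (c+1) : ℤ) := by
    unfold Av; rw [← hcdef]
  rw [h5] at h4
  rw [h1, h2, hAv, h6]
  push_cast at h3 h4 ⊢
  linarith

lemma sa_succ_eq (P : GTPattern r l) (hP : P.Stable) {n : ℕ} (hn : n + 1 ≤ r) :
    P.sa (n+1) = P.sb (n+1) - (Bv P n : ℤ) := by
  rcases eq_or_lt_of_le hn with heq | hlt
  · have hmA : mA P n = 0 := by
      unfold mA
      rw [Finset.Icc_eq_empty (by omega), Finset.filter_empty, Finset.card_empty]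
    have hsa : P.sa (n+1) = 0 := by
      unfold GTPattern.sa
      rw [Finset.Icc_eq_empty (by omega), Finset.sum_empty]
    have hsb : P.sb (n+1) = (P.b (n+1) (n+1) : ℤ) := by
      unfold GTPattern.sb
      have hIcc : Finset.Icc (n+1) r = {n+1} := by
        rw [← heq]; exact Finset.Icc_self _
      rw [hIcc, Finset.sum_singleton]
    unfold Bv
    rw [hmA, hsa, hsb]
    norm_num
  · have hd := mA_le P n (by omega)
    set d := n + 1 + mA P n with hddef
    have hdr : n+1 ≤ d ∧ d ≤ r := by omega
    have hrow : ∀ p ∈ Finset.Icc (n+2) r,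
        (P.a (n+1) p : ℤ) = if p ≤ d then (P.b (n+1) (p-1) : ℤ) else (P.b (n+1) p : ℤ) := by
      intro p hp
      rw [Finset.mem_Icc] at hp
      rw [a_row_eq P hP hlt hp.1 hp.2, ← hddef]
      split <;> rfl
    have h1 : P.sa (n+1) = (∑ p ∈ Finset.Icc (n+2) d, (P.b (n+1) (p-1) : ℤ))
        + ∑ p ∈ Finset.Icc (d+1) r, (P.b (n+1) p : ℤ) := by
      unfold GTPattern.sa
      rw [Finset.sum_congr rfl hrow, sum_split _ (by omega) hdr.2]
      congr 1
      · exact Finset.sum_congr rfl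
          (fun p hp => by rw [Finset.mem_Icc] at hp; rw [if_pos (by omega)])
      · exact Finset.sum_congr rfl
          (fun p hp => by rw [Finset.mem_Icc] at hp; rw [if_neg (by omega)])
    have h2 : ∑ p ∈ Finset.Icc (n+2) d, (P.b (n+1) (p-1) : ℤ)
        = ∑ q ∈ Finset.Icc (n+1) (d-1), (P.b (n+1) q : ℤ) := by
      have hs := sum_shift (fun q => (P.b (n+1) (q-1) : ℤ)) (n+1) (d-1)
      rw [show d - 1 + 1 = d by omega] at hs
      rw [← hs]
      exact Finset.sum_congr rfl (fun q _ => by norm_num)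
    have h3 : P.sb (n+1) = (∑ q ∈ Finset.Icc (n+1) (d-1), (P.b (n+1) q : ℤ))
        + ∑ q ∈ Finset.Icc d r, (P.b (n+1) q : ℤ) := by
      unfold GTPattern.sb
      have := sum_split (fun q => (P.b (n+1) q : ℤ))
        (show n+1 ≤ (d-1)+1 by omega) (show d-1 ≤ r by omega)
      rw [show d - 1 + 1 = d by omega] at this
      exact this
    have h4 : ∑ q ∈ Finset.Icc d r, (P.b (n+1) q : ℤ)
        = (P.b (n+1) d : ℤ) + ∑ q ∈ Finset.Icc (d+1) r, (P.b (n+1) q : ℤ) := by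
      rw [sum_split (fun q => (P.b (n+1) q : ℤ)) (show d ≤ d+1 by omega) hdr.2]
      rw [Finset.Icc_self, Finset.sum_singleton]
    have hBv : (Bv P n : ℤ) = (P.b (n+1) d : ℤ) := by
      unfold Bv; rw [← hddef]
    rw [h1, h2, hBv, h3, h4]
    ring

lemma wgt_eq (P : GTPattern r l) (hP : P.Stable) {n : ℕ} (hn : n < r) :
    P.wgt (r - n) = (Av P n : ℤ) - (Bv P n : ℤ) := by
  unfold GTPattern.wgt
  rw [show r - (r - n) = n by omega, show r + 1 - (r - n) = n + 1 by omega]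
  have h1 := sb_eq P hP hn
  have h2 := sa_succ_eq P hP (show n+1 ≤ r by omega)
  linarith

lemma sa_eq_sum (P : GTPattern r l) (hP : P.Stable) :
    ∀ k n, n + k = r → P.sa n = ∑ m ∈ Finset.Ico n r, ((Av P m : ℤ) + (Bv P m : ℤ)) := by
  intro k
  induction k with
  | zero =>
    intro n h
    have hnr : n = r := by omega
    subst hnr
    unfold GTPattern.sa
    rw [Finset.Icc_eq_empty (by omega), Finset.Ico_self]
    simp
  | succ k ih =>
    intro n h
    have hn : n < r := by omega
    have h1 := sb_eq P hP hn
    have h2 := sa_succ_eq P hP (show n+1 ≤ r by omega)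
    have h3 := ih (n+1) (by omega)
    have hins : Finset.Ico n r = insert n (Finset.Ico (n+1) r) := by
      ext x
      simp only [Finset.mem_Ico, Finset.mem_insert]
      omega
    rw [hins, Finset.sum_insert (by simp)]
    linarith

lemma sa_zero (P : GTPattern r l) : P.sa 0 = ∑ q ∈ Finset.Icc 1 r, (Lfun l q : ℤ) := by
  unfold GTPattern.sa
  simp only [Nat.zero_add]
  calc ∑ p ∈ Finset.Icc 1 r, (P.a 0 p : ℤ)
      = ∑ p ∈ Finset.Icc 1 r, (Lfun l (r+1-p) : ℤ) :=
        Finset.sum_congr rfl (fun p hp => by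
          simp only [Finset.mem_Icc] at hp
          rw [P.top p hp.1 hp.2])
    _ = ∑ q ∈ Finset.Icc 1 r, (Lfun l q : ℤ) :=
        Finset.sum_nbij' (fun p => r + 1 - p) (fun q => r + 1 - q)
          (fun p hp => by simp only [Finset.mem_Icc] at hp ⊢; omega)
          (fun q hq => by simp only [Finset.mem_Icc] at hq ⊢; omega)
          (fun p hp => by
            simp only [Finset.mem_Icc] at hp
            show r + 1 - (r + 1 - p) = p
            omega)
          (fun q hq => by
            simp only [Finset.mem_Icc] at hq
            show r + 1 - (r + 1 - q) = q
            omega)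
          (fun p hp => rfl)

lemma mB_eq_zero (P : GTPattern r l) {n : ℕ} (hn : n < r)
    (posn : ∀ p, n+1 ≤ p → p ≤ r → 0 < P.a n p) (hA : Av P n = 0) : mB P n = 0 := by
  by_contra hne
  have h1 := mB_le P n hn
  have h2 : 0 < P.a n (r - mB P n + 1) := posn _ (by omega) (by omega)
  unfold Av at hA
  omega

lemma step_B (P : GTPattern r l) (hP : P.Stable) {n : ℕ} (hn : n < r)
    (posn : ∀ p, n+1 ≤ p → p ≤ r → 0 < P.a n p)
    (hB : Bv P n = 0) (hApos : 0 < Av P n) :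
    1 ≤ mB P n ∧ n + 1 + mA P n = r := by
  have hmB1 : 1 ≤ mB P n := by
    by_contra h
    have hz : mB P n = 0 := by omega
    unfold Av at hApos
    rw [hz] at hApos
    rw [P.a_zero n (r - 0 + 1) (by omega)] at hApos
    omega
  refine ⟨hmB1, ?_⟩
  by_contra hne
  have h1' := mA_le P n hn
  have hd : n + 1 + mA P n < r := by omega
  have hmble := mB_le P n hn
  have hb := b_row_eq P hP hn (show n+1 ≤ n+1+mA P n by omega) (by omega)
  unfold Bv at hB
  rw [hb] at hB
  split at hB
  · have := posn (n+1+mA P n) (by omega) (by omega)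
    omega
  · have := posn (n+1+mA P n+1) (by omega) (by omega)
    omega

lemma row_pos (P : GTPattern r l) (hP : P.Stable)
    (H : ∀ m, m < r → Av P m = 0 ∨ (Bv P m = 0 ∧ 0 < Av P m)) :
    ∀ n, n < r → ∀ p, n + 1 ≤ p → p ≤ r → 0 < P.a n p := by
  intro n
  induction n with
  | zero =>
    intro _ p h1 h2
    rw [P.top p h1 h2]
    exact one_le_Lfun l _ (by omega)
  | succ n ih =>
    intro hn p h1 h2
    have hn' : n < r := by omega
    have ihp := ih hn'
    have hmble := mB_le P n hn'
    rcases H n hn' with hA | ⟨hB, hApos⟩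
    · have hmB : mB P n = 0 := mB_eq_zero P hn' ihp hA
      rw [a_row_eq P hP hn h1 h2]
      split_ifs with hsp
      · rw [b_row_eq P hP hn' (show n+1 ≤ p-1 by omega) (show p-1 ≤ r by omega),
          if_pos (by omega)]
        exact ihp _ (by omega) (by omega)
      · rw [b_row_eq P hP hn' (by omega) h2, if_pos (by omega)]
        exact ihp _ (by omega) h2
    · obtain ⟨hmB1, hdr⟩ := step_B P hP hn' ihp hB hApos
      rw [a_row_eq P hP hn h1 h2, if_pos (by omega)]
      rw [b_row_eq P hP hn' (show n+1 ≤ p-1 by omega) (show p-1 ≤ r by omega)]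
      split_ifs with hsp
      · exact ihp _ (by omega) (by omega)
      · exact ihp _ (by omega) (by omega)

end BBFAux

namespace BBFAux

variable {r : ℕ} {l : ℕ → ℕ}

open scoped Classical

lemma row_anti (P : GTPattern r l) (hP : P.Stable) {n : ℕ} (hn : n < r) :
    ∀ p q, n + 1 ≤ p → p < q → q ≤ r → P.a n q < P.a n p := by
  intro p q
  induction q with
  | zero => omega
  | succ q ih =>
    intro h1 h2 h3
    rcases Nat.lt_or_ge p q with h | h
    · have hs := hP.1.1 n q hn (by omega) (by omega)
      have := ih h1 h (by omega)
      omega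
    · have hpq : p = q := by omega
      rw [hpq]
      exact hP.1.1 n q hn (by omega) (by omega)

lemma row_inj (P : GTPattern r l) (hP : P.Stable) {n : ℕ} (hn : n < r) {p q : ℕ}
    (hp1 : n+1 ≤ p) (hp2 : p ≤ r) (hq1 : n+1 ≤ q) (hq2 : q ≤ r)
    (he : P.a n p = P.a n q) : p = q := by
  rcases Nat.lt_trichotomy p q with h | h | h
  · have := row_anti P hP hn p q hp1 h hq2; omega
  · exact h
  · have := row_anti P hP hn q p hq1 h hp2; omega

/-- In each case of a stable step, there is a position `q` in row `a n` holding the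
removed value `V n` such that row `a (n+1)` is row `a n` with that position deleted. -/
lemma step_struct (P : GTPattern r l) (hP : P.Stable) (V : ℕ → ℕ)
    {n : ℕ} (hn : n + 1 < r)
    (posn : ∀ p, n+1 ≤ p → p ≤ r → 0 < P.a n p)
    (Hn : (Av P n = 0 ∧ Bv P n = V n) ∨ (Bv P n = 0 ∧ Av P n = V n))
    (hV1 : 1 ≤ V n) :
    ∃ q, n+1 ≤ q ∧ q ≤ r ∧ P.a n q = V n ∧
      ∀ p, n+2 ≤ p → p ≤ r → P.a (n+1) p = if p ≤ q then P.a n (p-1) else P.a n p := by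
  have hmble := mB_le P n (by omega)
  have hmale := mA_le P n (by omega)
  rcases Hn with ⟨hA0, hBV⟩ | ⟨hB0, hAV⟩
  · have hmB0 : mB P n = 0 := mB_eq_zero P (by omega) posn hA0
    refine ⟨n + 1 + mA P n, by omega, by omega, ?_, ?_⟩
    · have hb := b_row_eq P hP (show n < r by omega)
        (show n+1 ≤ n+1+mA P n by omega) (by omega)
      rw [if_pos (by omega)] at hb
      unfold Bv at hBV
      rw [hb] at hBV
      exact hBV
    · intro p hp1 hp2
      rw [a_row_eq P hP hn hp1 hp2]
      split_ifs with hsp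
      · rw [b_row_eq P hP (show n < r by omega) (show n+1 ≤ p-1 by omega)
          (show p-1 ≤ r by omega), if_pos (by omega)]
      · rw [b_row_eq P hP (show n < r by omega) (show n+1 ≤ p by omega) hp2,
          if_pos (by omega)]
  · have hApos : 0 < Av P n := by omega
    obtain ⟨hmB1, hdAr⟩ := step_B P hP (show n < r by omega) posn hB0 hApos
    refine ⟨r - mB P n + 1, by omega, by omega, ?_, ?_⟩
    · exact hAV
    · intro p hp1 hp2
      rw [a_row_eq P hP hn hp1 hp2, if_pos (by omega)]
      rw [b_row_eq P hP (show n < r by omega) (show n+1 ≤ p-1 by omega)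
        (show p-1 ≤ r by omega)]
      split_ifs with h1 h2
      · rfl
      · omega
      · omega
      · rw [show p - 1 + 1 = p by omega]

lemma content (P : GTPattern r l) (hP : P.Stable) (V : ℕ → ℕ)
    (H : ∀ m, m < r → (Av P m = 0 ∧ Bv P m = V m) ∨ (Bv P m = 0 ∧ Av P m = V m))
    (hV1 : ∀ m, m < r → 1 ≤ V m)
    (hV0 : (Finset.Ico 0 r).image V = (Finset.Icc 1 r).image (Lfun l))
    (hVinj : ∀ m1, m1 < r → ∀ m2, m2 < r → V m1 = V m2 → m1 = m2) :
    ∀ n, n < r → (Finset.Icc (n+1) r).image (P.a n) = (Finset.Ico n r).image V := by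
  have posall := row_pos P hP (fun m hm => by
    rcases H m hm with ⟨h1, _⟩ | ⟨h1, h2⟩
    · exact Or.inl h1
    · exact Or.inr ⟨h1, by have := hV1 m hm; omega⟩)
  intro n
  induction n with
  | zero =>
    intro _
    rw [hV0]
    ext x
    simp only [Finset.mem_image, Finset.mem_Icc, Nat.zero_add]
    constructor
    · rintro ⟨p, hp, rfl⟩
      exact ⟨r+1-p, ⟨by omega, by omega⟩, (P.top p hp.1 hp.2).symm⟩
    · rintro ⟨s, hs, rfl⟩
      refine ⟨r+1-s, ⟨by omega, by omega⟩, ?_⟩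
      rw [P.top (r+1-s) (by omega) (by omega), show r+1-(r+1-s) = s by omega]
  | succ n ih =>
    intro hn
    have hn' : n < r := by omega
    obtain ⟨q, hq1, hq2, haq, hstep⟩ :=
      step_struct P hP V hn (posall n hn') (H n hn') (hV1 n hn')
    have himg : (Finset.Icc (n+2) r).image (P.a (n+1))
        = ((Finset.Icc (n+1) r).image (P.a n)).erase (V n) := by
      ext x
      simp only [Finset.mem_image, Finset.mem_erase, Finset.mem_Icc]
      constructor
      · rintro ⟨p, hp, rfl⟩
        rw [hstep p hp.1 hp.2]
        split_ifs with hc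
        · refine ⟨?_, ⟨p-1, ⟨by omega, by omega⟩, rfl⟩⟩
          rw [← haq]
          intro hcon
          have := row_inj P hP hn' (p := p-1) (q := q) (by omega) (by omega) hq1 hq2 hcon
          omega
        · refine ⟨?_, ⟨p, ⟨by omega, hp.2⟩, rfl⟩⟩
          rw [← haq]
          intro hcon
          have := row_inj P hP hn' (p := p) (q := q) (by omega) hp.2 hq1 hq2 hcon
          omega
      · rintro ⟨hne, p0, hp0, rfl⟩
        have hp0q : p0 ≠ q := by
          intro hh
          exact hne (by rw [hh, haq])
        rcases Nat.lt_or_ge p0 q with h | h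
        · refine ⟨p0+1, ⟨by omega, by omega⟩, ?_⟩
          rw [hstep (p0+1) (by omega) (by omega), if_pos (by omega)]
          simp
        · refine ⟨p0, ⟨by omega, hp0.2⟩, ?_⟩
          rw [hstep p0 (by omega) hp0.2, if_neg (by omega)]
    have hVimg : (Finset.Ico (n+1) r).image V
        = ((Finset.Ico n r).image V).erase (V n) := by
      ext x
      simp only [Finset.mem_image, Finset.mem_erase, Finset.mem_Ico]
      constructor
      · rintro ⟨m, hm, rfl⟩
        refine ⟨fun h => ?_, ⟨m, ⟨by omega, hm.2⟩, rfl⟩⟩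
        have := hVinj m hm.2 n hn' h
        omega
      · rintro ⟨hne, m, hm, rfl⟩
        refine ⟨m, ⟨?_, hm.2⟩, rfl⟩
        rcases Nat.eq_or_lt_of_le hm.1 with h | h
        · exact absurd (by rw [← h]) hne
        · omega
    rw [show n+1+1 = n+2 from rfl, himg, ih hn', hVimg]

lemma count_pos (P : GTPattern r l) (hP : P.Stable) (V : ℕ → ℕ)
    (hVinj : ∀ m1, m1 < r → ∀ m2, m2 < r → V m1 = V m2 → m1 = m2)
    {n q : ℕ} (hn : n < r) (hq1 : n+1 ≤ q) (hq2 : q ≤ r)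
    (hcont : (Finset.Icc (n+1) r).image (P.a n) = (Finset.Ico n r).image V) :
    ((Finset.Ico n r).filter (fun m => P.a n q < V m)).card = q - (n+1) := by
  have h1 : (Finset.Icc (n+1) r).filter (fun p => P.a n q < P.a n p)
      = Finset.Icc (n+1) (q-1) := by
    ext p
    simp only [Finset.mem_filter, Finset.mem_Icc]
    constructor
    · rintro ⟨⟨hp1, hp2⟩, hlt⟩
      refine ⟨hp1, ?_⟩
      by_contra hcon
      rcases Nat.lt_or_ge q p with h | h
      · have := row_anti P hP hn q p hq1 h hp2
        omega
      · have hpq : p = q := by omega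
        rw [hpq] at hlt
        omega
    · rintro ⟨hp1, hp2⟩
      exact ⟨⟨hp1, by omega⟩, row_anti P hP hn p q hp1 (by omega) hq2⟩
  have hc1 : ((Finset.Icc (n+1) r).filter (fun p => P.a n q < P.a n p)).card = q - (n+1) := by
    rw [h1, Nat.card_Icc]
    omega
  have hc2 : (((Finset.Icc (n+1) r).filter (fun p => P.a n q < P.a n p)).image (P.a n)).card
      = q - (n+1) := by
    rw [Finset.card_image_of_injOn, hc1]
    intro x hx y hy hxy
    simp only [Finset.coe_filter, Set.mem_setOf_eq, Finset.mem_Icc] at hx hy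
    exact row_inj P hP hn hx.1.1 hx.1.2 hy.1.1 hy.1.2 hxy
  rw [← Finset.filter_image] at hc2
  rw [hcont] at hc2
  rw [Finset.filter_image] at hc2
  rw [Finset.card_image_of_injOn] at hc2
  · exact hc2
  · intro x hx y hy hxy
    simp only [Finset.coe_filter, Set.mem_setOf_eq, Finset.mem_Ico] at hx hy
    exact hVinj x hx.1.2 y hy.1.2 hxy

end BBFAux


open scoped Classical in
/-- Let `P ∈ GT(λ+ρ)` be a stable GT-pattern of rank `r` with
associated signed permutation `w = (σ, ε) ∈ W(C_r)` (the unique `w` with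
`w(λ+ρ) = −(wgt_1(P), …, wgt_r(P))`), and let `m_i(P)` be the total number of
maximal entries in rows `b_{r+1−i}` and `a_{r+1−i}` of `P`.  Then
`m_i(P) = inv_i(w⁻¹)` if `ε^{(i)} = +1` and `m_i(P) = i + pr_i(w⁻¹)` if
`ε^{(i)} = −1`, where `inv_i(w⁻¹) = #{ j < i : σ⁻¹(j) > σ⁻¹(i) }` and
`pr_i(w⁻¹) = #{ j < i : σ⁻¹(j) < σ⁻¹(i) }`.  (`Fin r` indexes `1, …, r` via
`i ↦ i.1 + 1`, so row `b_{r+1−i}` is row `b_{r−i.1}`.) -/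
theorem gt_stable_maximal_count (r : ℕ) (hr : 1 ≤ r) (l : ℕ → ℕ)
    (P : GTPattern r l) (hP : P.Stable)
    (σ : Equiv.Perm (Fin r)) (ε : Fin r → ℤˣ)
    (hw : ∀ j : Fin r,
      (ε j : ℤ) * (Lfun l ((σ⁻¹ j).1 + 1) : ℤ) = - P.wgt (j.1 + 1)) :
    ∀ i : Fin r,
      ((Finset.Icc (r - i.1) r).filter (fun j => P.MaximalB (r - i.1) j)).card
        + ((Finset.Icc (r - i.1 + 1) r).filter (fun j => P.MaximalA (r - i.1) j)).card
      = if ε i = 1 then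
          (Finset.univ.filter (fun j : Fin r => j < i ∧ σ⁻¹ i < σ⁻¹ j)).card
        else
          (i.1 + 1) + (Finset.univ.filter (fun j : Fin r => j < i ∧ σ⁻¹ j < σ⁻¹ i)).card := by
  have hr0 : 0 < r := hr
  set idx : ℕ → Fin r := fun m => ⟨(r - 1 - m) % r, Nat.mod_lt _ hr0⟩ with hidx
  have hidx_val : ∀ m, m < r → (idx m).1 = r - 1 - m := by
    intro m hm
    simp only [hidx]
    exact Nat.mod_eq_of_lt (by omega)
  set V : ℕ → ℕ := fun m => Lfun l ((σ⁻¹ (idx m)).1 + 1) with hVdef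
  have hw' : ∀ n, n < r →
      (ε (idx n) : ℤ) * (V n : ℤ) = (BBFAux.Bv P n : ℤ) - (BBFAux.Av P n : ℤ) := by
    intro n hn
    have h1 := hw (idx n)
    have h2 := BBFAux.wgt_eq P hP hn
    rw [hidx_val n hn, show r - 1 - n + 1 = r - n by omega, h2] at h1
    have hVn : (V n : ℤ) = (Lfun l ((σ⁻¹ (idx n)).1 + 1) : ℤ) := rfl
    rw [hVn]
    linarith
  have hV1 : ∀ m, m < r → 1 ≤ V m := by
    intro m hm
    have h := BBFAux.one_le_Lfun l ((σ⁻¹ (idx m)).1 + 1) (by omega)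
    simpa [hVdef] using h
  have hVinj : ∀ m1, m1 < r → ∀ m2, m2 < r → V m1 = V m2 → m1 = m2 := by
    intro m1 h1 m2 h2 he
    simp only [hVdef] at he
    have he2 := (BBFAux.Lfun_strictMono l).injective he
    have he3 : σ⁻¹ (idx m1) = σ⁻¹ (idx m2) := Fin.ext (by omega)
    have he4 := σ⁻¹.injective he3
    have he5 := congrArg Fin.val he4
    rw [hidx_val m1 h1, hidx_val m2 h2] at he5
    omega
  have hV0 : (Finset.Ico 0 r).image V = (Finset.Icc 1 r).image (Lfun l) := by
    ext x
    simp only [Finset.mem_image, Finset.mem_Ico, Finset.mem_Icc]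
    constructor
    · rintro ⟨m, hm, rfl⟩
      exact ⟨(σ⁻¹ (idx m)).1 + 1, ⟨by omega, by have := (σ⁻¹ (idx m)).2; omega⟩, rfl⟩
    · rintro ⟨s, hs, rfl⟩
      have hsr : s - 1 < r := by omega
      set t : Fin r := ⟨s - 1, hsr⟩ with ht
      refine ⟨r - 1 - (σ t).1, ⟨by omega, by have := (σ t).2; omega⟩, ?_⟩
      have h1 : idx (r - 1 - (σ t).1) = σ t := by
        apply Fin.ext
        rw [hidx_val _ (by omega)]
        have := (σ t).2
        omega
      show Lfun l ((σ⁻¹ (idx (r - 1 - (σ t).1))).1 + 1) = Lfun l s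
      rw [h1, ← Equiv.Perm.mul_apply, inv_mul_cancel, Equiv.Perm.one_apply]
      show Lfun l (s - 1 + 1) = Lfun l s
      congr 1
      omega
  have hsum1 := BBFAux.sa_eq_sum P hP r 0 (by omega)
  have hsum2 : P.sa 0 = ∑ m ∈ Finset.Ico 0 r, (V m : ℤ) := by
    rw [BBFAux.sa_zero P]
    have e1 : ∑ m ∈ Finset.Ico 0 r, (V m : ℤ) = ∑ t : Fin r, (V t.1 : ℤ) := by
      rw [show Finset.Ico 0 r = Finset.range r from by ext; simp,
        ← Fin.sum_univ_eq_sum_range]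
    have e2 : ∀ t : Fin r, (V t.1 : ℤ) = (Lfun l ((σ⁻¹ (Fin.rev t)).1 + 1) : ℤ) := by
      intro t
      have hrev : idx t.1 = Fin.rev t := by
        apply Fin.ext
        rw [hidx_val _ t.2, Fin.val_rev]
        omega
      show (Lfun l ((σ⁻¹ (idx t.1)).1 + 1) : ℤ) = _
      rw [hrev]
    have e3 : ∑ t : Fin r, (Lfun l ((σ⁻¹ (Fin.rev t)).1 + 1) : ℤ)
        = ∑ t : Fin r, (Lfun l (t.1 + 1) : ℤ) := by
      have := Equiv.sum_comp (Fin.revPerm.trans (σ⁻¹ : Equiv.Perm (Fin r)))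
        (fun t : Fin r => (Lfun l (t.1 + 1) : ℤ))
      simpa using this
    have e4 : ∑ t : Fin r, (Lfun l (t.1 + 1) : ℤ) = ∑ q ∈ Finset.Icc 1 r, (Lfun l q : ℤ) := by
      rw [Fin.sum_univ_eq_sum_range (fun m => (Lfun l (m + 1) : ℤ)) r]
      rw [show Finset.range r = Finset.Icc 0 (r - 1) from by ext; simp; omega]
      have hs := BBFAux.sum_shift (fun q => (Lfun l q : ℤ)) 0 (r - 1)
      rw [show 0 + 1 = 1 from rfl, show r - 1 + 1 = r by omega] at hs
      exact hs
    rw [e1, Finset.sum_congr rfl (fun t _ => e2 t), e3, e4]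
  have hptws : ∀ m ∈ Finset.Ico 0 r, (V m : ℤ) ≤ (BBFAux.Av P m : ℤ) + (BBFAux.Bv P m : ℤ) := by
    intro m hm
    rw [Finset.mem_Ico] at hm
    have h := hw' m hm.2
    have ha : (0:ℤ) ≤ (BBFAux.Av P m : ℤ) := Int.natCast_nonneg _
    have hb : (0:ℤ) ≤ (BBFAux.Bv P m : ℤ) := Int.natCast_nonneg _
    rcases Int.units_eq_one_or (ε (idx m)) with he | he <;> rw [he] at h <;>
      simp only [Units.val_one, Units.val_neg, one_mul, neg_mul, neg_neg] at h <;> linarith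
  have hforce : ∀ m, m < r → (BBFAux.Av P m : ℤ) + (BBFAux.Bv P m : ℤ) = (V m : ℤ) := by
    have hzero : ∑ m ∈ Finset.Ico 0 r,
        ((BBFAux.Av P m : ℤ) + (BBFAux.Bv P m : ℤ) - (V m : ℤ)) = 0 := by
      rw [Finset.sum_sub_distrib, ← hsum1, ← hsum2]
      ring
    have hall := (Finset.sum_eq_zero_iff_of_nonneg (fun m hm => by
      have := hptws m hm
      linarith)).mp hzero
    intro m hm
    have := hall m (by rw [Finset.mem_Ico]; omega)
    linarith
  have H : ∀ m, m < r → (BBFAux.Av P m = 0 ∧ BBFAux.Bv P m = V m)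
      ∨ (BBFAux.Bv P m = 0 ∧ BBFAux.Av P m = V m) := by
    intro m hm
    have h1 := hw' m hm
    have h2 := hforce m hm
    rcases Int.units_eq_one_or (ε (idx m)) with he | he <;> rw [he] at h1 <;>
      simp only [Units.val_one, Units.val_neg, one_mul, neg_mul, neg_neg] at h1
    · left; constructor <;> omega
    · right; constructor <;> omega
  have posall := BBFAux.row_pos P hP (fun m hm => by
    rcases H m hm with ⟨h1, _⟩ | ⟨h1, _⟩
    · exact Or.inl h1
    · refine Or.inr ⟨h1, ?_⟩
      have := hV1 m hm
      omega)
  have hcont := BBFAux.content P hP V H hV1 hV0 hVinj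
  intro i
  have hir : i.1 < r := i.2
  set n := r - 1 - i.1 with hn
  have hnr : n < r := by omega
  have hii : idx n = i := by
    apply Fin.ext
    rw [hidx_val n hnr]
    omega
  have hrn : r - i.1 = n + 1 := by omega
  rw [hrn]
  show BBFAux.mB P n + BBFAux.mA P n = _
  -- the two inversion-type cardinalities
  have hbij : ((Finset.Ico n r).filter (fun m => V n < V m)).card
      = (Finset.univ.filter (fun j : Fin r => j < i ∧ σ⁻¹ i < σ⁻¹ j)).card := by
    apply Finset.card_nbij' (i := fun m => idx m) (j := fun j => r - 1 - j.1)
    · intro m hm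
      simp only [Finset.mem_coe, Finset.mem_filter, Finset.mem_Ico] at hm
      simp only [Finset.mem_coe, Finset.mem_filter, Finset.mem_univ, true_and]
      have hml : m < r := hm.1.2
      have hmn : n < m := by
        rcases Nat.eq_or_lt_of_le hm.1.1 with h | h
        · rw [← h] at hm; omega
        · exact h
      have hlt : Lfun l ((σ⁻¹ (idx n)).1 + 1) < Lfun l ((σ⁻¹ (idx m)).1 + 1) := hm.2
      have h2 := (BBFAux.Lfun_strictMono l).lt_iff_lt.mp hlt
      rw [hii] at h2
      constructor
      · rw [Fin.lt_def, hidx_val m hml]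
        omega
      · rw [Fin.lt_def]
        omega
    · intro j hj
      simp only [Finset.mem_coe, Finset.mem_filter, Finset.mem_univ, true_and] at hj
      simp only [Finset.mem_coe, Finset.mem_filter, Finset.mem_Ico]
      obtain ⟨hji, hs⟩ := hj
      rw [Fin.lt_def] at hji
      have hidxj : idx (r - 1 - j.1) = j := by
        apply Fin.ext
        rw [hidx_val _ (by omega)]
        have := j.2
        omega
      refine ⟨⟨by omega, by omega⟩, ?_⟩
      show Lfun l ((σ⁻¹ (idx n)).1 + 1) < Lfun l ((σ⁻¹ (idx (r - 1 - j.1))).1 + 1)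
      rw [hii, hidxj]
      exact (BBFAux.Lfun_strictMono l).lt_iff_lt.mpr (by rw [Fin.lt_def] at hs; omega)
    · intro m hm
      simp only [Finset.mem_coe, Finset.mem_filter, Finset.mem_Ico] at hm
      beta_reduce
      rw [hidx_val m hm.1.2]
      omega
    · intro j hj
      simp only [Finset.mem_coe, Finset.mem_filter, Finset.mem_univ, true_and] at hj
      have hji := hj.1
      rw [Fin.lt_def] at hji
      beta_reduce
      apply Fin.ext
      rw [hidx_val _ (by omega)]
      omega
  have hcardlt : (Finset.univ.filter (fun j : Fin r => j < i)).card = i.1 := by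
    rw [show (Finset.univ.filter (fun j : Fin r => j < i)) = Finset.Iio i from by
      ext j; simp [Finset.mem_Iio]]
    exact Fin.card_Iio i
  have hsplit := Finset.card_filter_add_card_filter_not
    (s := Finset.univ.filter (fun j : Fin r => j < i)) (p := fun j => σ⁻¹ i < σ⁻¹ j)
  rw [Finset.filter_filter, Finset.filter_filter] at hsplit
  have hswap : (Finset.univ.filter (fun j : Fin r => j < i ∧ ¬ σ⁻¹ i < σ⁻¹ j))
      = Finset.univ.filter (fun j : Fin r => j < i ∧ σ⁻¹ j < σ⁻¹ i) := by
    ext j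
    simp only [Finset.mem_filter, Finset.mem_univ, true_and]
    constructor
    · rintro ⟨hj, hns⟩
      refine ⟨hj, ?_⟩
      rcases lt_trichotomy (σ⁻¹ j) (σ⁻¹ i) with h | h | h
      · exact h
      · exact absurd (σ⁻¹.injective h) (ne_of_lt hj)
      · exact absurd h hns
    · rintro ⟨hj, hs⟩
      exact ⟨hj, fun hcon => absurd (lt_trans hs hcon) (lt_irrefl _)⟩
  rw [hswap, hcardlt] at hsplit
  -- main case split
  rcases H n hnr with ⟨hA0, hBV⟩ | ⟨hB0, hAV⟩
  · -- ε i = 1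
    have hε : ε i = 1 := by
      rcases Int.units_eq_one_or (ε i) with he | he
      · exact he
      · exfalso
        have h1 := hw' n hnr
        rw [hii, he] at h1
        simp only [Units.val_neg, Units.val_one, neg_mul, one_mul] at h1
        have := hV1 n hnr
        omega
    rw [if_pos hε]
    have hmB0 : BBFAux.mB P n = 0 := BBFAux.mB_eq_zero P hnr (posall n hnr) hA0
    have hmale := BBFAux.mA_le P n hnr
    have hdle : n + 1 + BBFAux.mA P n ≤ r := by omega
    have had : P.a n (n + 1 + BBFAux.mA P n) = V n := by
      have hb := BBFAux.b_row_eq P hP hnr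
        (show n+1 ≤ n+1+BBFAux.mA P n by omega) hdle
      rw [if_pos (by omega)] at hb
      unfold BBFAux.Bv at hBV
      rw [hb] at hBV
      exact hBV
    have hcnt := BBFAux.count_pos P hP V hVinj hnr
      (show n+1 ≤ n+1+BBFAux.mA P n by omega) hdle (hcont n hnr)
    rw [had] at hcnt
    omega
  · -- ε i = -1
    have hApos : 0 < BBFAux.Av P n := by
      have := hV1 n hnr
      omega
    have hε : ε i = -1 := by
      rcases Int.units_eq_one_or (ε i) with he | he
      · exfalso
        have h1 := hw' n hnr
        rw [hii, he] at h1
        simp only [Units.val_one, one_mul] at h1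
        have := hV1 n hnr
        omega
      · exact he
    rw [if_neg (by rw [hε]; decide)]
    obtain ⟨hmB1, hdAr⟩ := BBFAux.step_B P hP hnr (posall n hnr) hB0 hApos
    have hmble := BBFAux.mB_le P n hnr
    have hc1 : n + 1 ≤ r - BBFAux.mB P n + 1 := by omega
    have hc2 : r - BBFAux.mB P n + 1 ≤ r := by omega
    have hac : P.a n (r - BBFAux.mB P n + 1) = V n := by
      unfold BBFAux.Av at hAV
      exact hAV
    have hcnt := BBFAux.count_pos P hP V hVinj hnr hc1 hc2 (hcont n hnr)
    rw [hac] at hcnt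
    omega
end

section
/- Let L_1 < L_2 < ⋯ < L_r be positive real numbers, λ+ρ = (L_1, …, L_r) ∈ ℝ^r, and d_λ(α) = 2⟨λ+ρ, α⟩/⟨α, α⟩. Let w = (σ, ε) ∈ W(C_r), fix 1 ≤ i ≤ r, and let D_i = { d_λ(α) : α ∈ Φ_w^{(i)} }. Then: if ε^{(i)} = +1, D_i = { L_{σ^{−1}(j)} − L_{σ^{−1}(i)} : j < i and σ^{−1}(j) > σ^{−1}(i) }; and if ε^{(i)} = −1, D_i = { L_{σ^{−1}(i)} } ∪ { L_{σ^{−1}(j)} + L_{σ^{−1}(i)} : j < i } ∪ { L_{σ^{−1}(i)} − L_{σ^{−1}(j)} : j < i and σ^{−1}(j) < σ^{−1}(i) }. -/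
/-! The root system `C_r` in `ℝ^r`, signed permutations, and the sets `Φ_w`. -/

/-- The standard basis vector `e k` of `ℝ^r`. -/
noncomputable def eVec (r : ℕ) (k : Fin r) : Fin r → ℝ := fun j => if j = k then 1 else 0

/-- The positive roots of `C_r`:
`Φ⁺ = { 2e_k } ∪ { e_m + e_l, e_m − e_l : l < m }`. -/
def PhiPlus (r : ℕ) : Set (Fin r → ℝ) :=
  {α | (∃ k : Fin r, α = (2 : ℝ) • eVec r k) ∨
       (∃ l m : Fin r, l < m ∧ (α = eVec r m + eVec r l ∨ α = eVec r m - eVec r l))}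

/-- The action of a signed permutation `w = (σ, ε)` on `ℝ^r`:
`w(t)_j = ε^{(j)} t_{σ⁻¹(j)}`. -/
noncomputable def wAct {r : ℕ} (σ : Equiv.Perm (Fin r)) (ε : Fin r → ℤˣ) (t : Fin r → ℝ) :
    Fin r → ℝ :=
  fun j => ((ε j : ℤ) : ℝ) * t (σ⁻¹ j)

/-- `Φ_w = { α ∈ Φ⁺ : w(α) ∈ Φ⁻ }` where `Φ⁻ = −Φ⁺`. -/
def PhiW {r : ℕ} (σ : Equiv.Perm (Fin r)) (ε : Fin r → ℤˣ) : Set (Fin r → ℝ) :=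
  {α | α ∈ PhiPlus r ∧ -(wAct σ ε α) ∈ PhiPlus r}

/-- The type-L root `α_{i,w} = 2 e_{σ⁻¹(i)}`. -/
noncomputable def rootL {r : ℕ} (σ : Equiv.Perm (Fin r)) (i : Fin r) : Fin r → ℝ :=
  (2 : ℝ) • eVec r (σ⁻¹ i)

/-- The type-S⁺ root `α⁺_{i,j,w} = e_{σ⁻¹(j)} + e_{σ⁻¹(i)}`. -/
noncomputable def rootP {r : ℕ} (σ : Equiv.Perm (Fin r)) (i j : Fin r) : Fin r → ℝ :=
  eVec r (σ⁻¹ j) + eVec r (σ⁻¹ i)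

/-- The type-S⁻ root `α⁻_{i,j,w}`, equal to `e_{σ⁻¹(j)} − e_{σ⁻¹(i)}` if
`σ⁻¹(j) > σ⁻¹(i)` and to `e_{σ⁻¹(i)} − e_{σ⁻¹(j)}` otherwise. -/
noncomputable def rootM {r : ℕ} (σ : Equiv.Perm (Fin r)) (i j : Fin r) : Fin r → ℝ :=
  if σ⁻¹ i < σ⁻¹ j then eVec r (σ⁻¹ j) - eVec r (σ⁻¹ i)
  else eVec r (σ⁻¹ i) - eVec r (σ⁻¹ j)

/-- `Φ_w^{(i)}`: those roots `α_{i,w}`, `α⁺_{i,j,w}`, `α⁻_{i,j,w}` (`j < i`)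
that lie in `Φ_w`. -/
def PhiWi {r : ℕ} (σ : Equiv.Perm (Fin r)) (ε : Fin r → ℤˣ) (i : Fin r) :
    Set (Fin r → ℝ) :=
  {α | (α = rootL σ i ∨ ∃ j : Fin r, j < i ∧ (α = rootP σ i j ∨ α = rootM σ i j)) ∧
       α ∈ PhiW σ ε}

/-- The standard inner product on `ℝ^r`. -/
noncomputable def ip {r : ℕ} (x y : Fin r → ℝ) : ℝ := ∑ j, x j * y j

/-- `d_λ(α) = 2⟨λ+ρ, α⟩ / ⟨α, α⟩`, for `λ+ρ = (L_1, …, L_r)`. -/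
noncomputable def dlam {r : ℕ} (L : Fin r → ℝ) (α : Fin r → ℝ) : ℝ := 2 * ip L α / ip α α


lemma ip_eVec_right {r : ℕ} (x : Fin r → ℝ) (k : Fin r) : ip x (eVec r k) = x k := by
  simp [ip, eVec, mul_ite, Finset.sum_ite_eq']

lemma ip_add_right {r : ℕ} (x y z : Fin r → ℝ) : ip x (y + z) = ip x y + ip x z := by
  simp [ip, mul_add, Finset.sum_add_distrib]

lemma ip_sub_right {r : ℕ} (x y z : Fin r → ℝ) : ip x (y - z) = ip x y - ip x z := by
  simp [ip, mul_sub, Finset.sum_sub_distrib]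

lemma ip_smul_right {r : ℕ} (c : ℝ) (x y : Fin r → ℝ) : ip x (c • y) = c * ip x y := by
  simp only [ip, Pi.smul_apply, smul_eq_mul, Finset.mul_sum]
  exact Finset.sum_congr rfl fun _ _ => by ring

lemma ip_eVec_left {r : ℕ} (x : Fin r → ℝ) (k : Fin r) : ip (eVec r k) x = x k := by
  simp [ip, eVec, ite_mul, Finset.sum_ite_eq]

lemma ip_smul_left {r : ℕ} (c : ℝ) (x y : Fin r → ℝ) : ip (c • x) y = c * ip x y := by
  simp only [ip, Pi.smul_apply, smul_eq_mul, Finset.mul_sum]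
  exact Finset.sum_congr rfl fun _ _ => by ring

lemma eVec_self {r : ℕ} (k : Fin r) : eVec r k k = 1 := by simp [eVec]

lemma dlam_rootL {r : ℕ} (L : Fin r → ℝ) (σ : Equiv.Perm (Fin r)) (i : Fin r) :
    dlam L (rootL σ i) = L (σ⁻¹ i) := by
  rw [dlam, rootL, ip_smul_right, ip_smul_left, ip_smul_right, ip_eVec_right, ip_eVec_right,
    eVec_self]
  ring

lemma dlam_rootP {r : ℕ} (L : Fin r → ℝ) (σ : Equiv.Perm (Fin r)) {i j : Fin r}
    (h : j ≠ i) : dlam L (rootP σ i j) = L (σ⁻¹ j) + L (σ⁻¹ i) := by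
  have hab : σ⁻¹ j ≠ σ⁻¹ i := fun hh => h (σ⁻¹.injective hh)
  simp only [dlam, rootP, ip_add_right, ip_eVec_right, Pi.add_apply, eVec, hab, hab.symm,
    if_true, if_false, ite_eq_right_iff, if_neg]
  simp [hab, hab.symm]
  ring

lemma dlam_rootM {r : ℕ} (L : Fin r → ℝ) (σ : Equiv.Perm (Fin r)) {i j : Fin r}
    (h : j ≠ i) : dlam L (rootM σ i j) =
      if σ⁻¹ i < σ⁻¹ j then L (σ⁻¹ j) - L (σ⁻¹ i) else L (σ⁻¹ i) - L (σ⁻¹ j) := by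
  have hab : σ⁻¹ j ≠ σ⁻¹ i := fun hh => h (σ⁻¹.injective hh)
  by_cases hlt : σ⁻¹ i < σ⁻¹ j <;>
    · simp only [rootM, hlt, if_true, if_false, dlam, ip_sub_right, ip_eVec_right, Pi.sub_apply]
      simp [eVec, hab, hab.symm, h, h.symm]
      ring

/-- In a positive root, the topmost nonzero coordinate is positive. -/
lemma phiPlus_pos_top {r : ℕ} {v : Fin r → ℝ} (hv : v ∈ PhiPlus r) {m : Fin r}
    (h0 : v m ≠ 0) (htop : ∀ n, m < n → v n = 0) : 0 < v m := by
  rcases hv with ⟨k, rfl⟩ | ⟨l, m', hlm, rfl | rfl⟩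
  · by_cases hk : m = k
    · subst hk; simp [eVec]
    · exact absurd (by simp [eVec, hk]) h0
  · by_cases hm' : m = m'
    · subst hm'; simp [eVec, hlm.ne']
    · by_cases hl : m = l
      · subst hl
        have := htop m' hlm
        simp [eVec, hlm.ne', hm'] at this
      · exact absurd (by simp [eVec, hm', hl]) h0
  · by_cases hm' : m = m'
    · subst hm'; simp [eVec, hlm.ne']
    · by_cases hl : m = l
      · subst hl
        have := htop m' hlm
        simp [eVec, hlm.ne', hm'] at this
      · exact absurd (by simp [eVec, hm', hl]) h0

lemma units_real_cases (u : ℤˣ) : ((u : ℤ) : ℝ) = 1 ∨ ((u : ℤ) : ℝ) = -1 := by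
  rcases Int.units_eq_one_or u with h | h <;> simp [h]

lemma units_pos_iff (u : ℤˣ) : (0:ℝ) < ((u : ℤ) : ℝ) ↔ u = 1 := by
  rcases Int.units_eq_one_or u with h | h <;> subst h <;> norm_num

lemma units_neg_pos_iff (u : ℤˣ) : (0:ℝ) < -((u : ℤ) : ℝ) ↔ u = -1 := by
  rcases Int.units_eq_one_or u with h | h <;> subst h <;> norm_num

lemma negw_rootL {r : ℕ} (σ : Equiv.Perm (Fin r)) (ε : Fin r → ℤˣ) (i : Fin r) :
    -(wAct σ ε (rootL σ i)) = fun k => if k = i then -(2 * ((ε i : ℤ) : ℝ)) else 0 := by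
  funext k
  by_cases hk : k = i
  · subst hk; simp [wAct, rootL, eVec]; ring
  · have : σ⁻¹ k ≠ σ⁻¹ i := fun hh => hk (σ⁻¹.injective hh)
    simp [wAct, rootL, eVec, this, hk]

lemma negw_rootP {r : ℕ} (σ : Equiv.Perm (Fin r)) (ε : Fin r → ℤˣ) {i j : Fin r} (hji : j ≠ i) :
    -(wAct σ ε (rootP σ i j))
      = fun k => if k = j then -((ε j : ℤ) : ℝ) else if k = i then -((ε i : ℤ) : ℝ) else 0 := by
  funext k
  by_cases hkj : k = j
  · subst hkj
    have : σ⁻¹ k ≠ σ⁻¹ i := fun hh => hji (σ⁻¹.injective hh)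
    simp [wAct, rootP, eVec, this, hji]
  · by_cases hki : k = i
    · subst hki
      have : σ⁻¹ k ≠ σ⁻¹ j := fun hh => hji (σ⁻¹.injective hh).symm
      simp [wAct, rootP, eVec, this, hkj]
    · have h1 : σ⁻¹ k ≠ σ⁻¹ j := fun hh => hkj (σ⁻¹.injective hh)
      have h2 : σ⁻¹ k ≠ σ⁻¹ i := fun hh => hki (σ⁻¹.injective hh)
      simp [wAct, rootP, eVec, h1, h2, hkj, hki]

lemma negw_rootM_lt {r : ℕ} (σ : Equiv.Perm (Fin r)) (ε : Fin r → ℤˣ) {i j : Fin r}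
    (hji : j ≠ i) (hlt : σ⁻¹ i < σ⁻¹ j) :
    -(wAct σ ε (rootM σ i j))
      = fun k => if k = j then -((ε j : ℤ) : ℝ) else if k = i then ((ε i : ℤ) : ℝ) else 0 := by
  funext k
  by_cases hkj : k = j
  · subst hkj
    have : σ⁻¹ k ≠ σ⁻¹ i := fun hh => hji (σ⁻¹.injective hh)
    simp [wAct, rootM, hlt, eVec, this, -Equiv.Perm.coe_inv]
  · by_cases hki : k = i
    · subst hki
      have : σ⁻¹ k ≠ σ⁻¹ j := fun hh => hji (σ⁻¹.injective hh).symm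
      simp [wAct, rootM, hlt, eVec, this, hkj, -Equiv.Perm.coe_inv]
    · have h1 : σ⁻¹ k ≠ σ⁻¹ j := fun hh => hkj (σ⁻¹.injective hh)
      have h2 : σ⁻¹ k ≠ σ⁻¹ i := fun hh => hki (σ⁻¹.injective hh)
      simp [wAct, rootM, hlt, eVec, h1, h2, hkj, hki, -Equiv.Perm.coe_inv]

lemma negw_rootM_gt {r : ℕ} (σ : Equiv.Perm (Fin r)) (ε : Fin r → ℤˣ) {i j : Fin r}
    (hji : j ≠ i) (hgt : σ⁻¹ j < σ⁻¹ i) :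
    -(wAct σ ε (rootM σ i j))
      = fun k => if k = j then ((ε j : ℤ) : ℝ) else if k = i then -((ε i : ℤ) : ℝ) else 0 := by
  have hnlt : ¬ σ⁻¹ i < σ⁻¹ j := not_lt.2 hgt.le
  funext k
  by_cases hkj : k = j
  · subst hkj
    have : σ⁻¹ k ≠ σ⁻¹ i := fun hh => hji (σ⁻¹.injective hh)
    simp [wAct, rootM, hnlt, eVec, this, -Equiv.Perm.coe_inv]
  · by_cases hki : k = i
    · subst hki
      have : σ⁻¹ k ≠ σ⁻¹ j := fun hh => hji (σ⁻¹.injective hh).symm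
      simp [wAct, rootM, hnlt, eVec, this, hkj, -Equiv.Perm.coe_inv]
    · have h1 : σ⁻¹ k ≠ σ⁻¹ j := fun hh => hkj (σ⁻¹.injective hh)
      have h2 : σ⁻¹ k ≠ σ⁻¹ i := fun hh => hki (σ⁻¹.injective hh)
      simp [wAct, rootM, hnlt, eVec, h1, h2, hkj, hki, -Equiv.Perm.coe_inv]

lemma pair_mem_phiPlus {r : ℕ} {p q : Fin r} (hpq : p < q) {c : ℝ} (hc : c = 1 ∨ c = -1) :
    (fun k => if k = p then c else if k = q then 1 else 0) ∈ PhiPlus r := by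
  rcases hc with rfl | rfl
  · refine Or.inr ⟨p, q, hpq, Or.inl ?_⟩
    funext k
    by_cases hkp : k = p
    · subst hkp; simp [eVec, hpq.ne]
    · by_cases hkq : k = q <;> simp [eVec, hkp, hkq, hpq.ne']
  · refine Or.inr ⟨p, q, hpq, Or.inr ?_⟩
    funext k
    by_cases hkp : k = p
    · subst hkp; simp [eVec, hpq.ne]
    · by_cases hkq : k = q <;> simp [eVec, hkp, hkq, hpq.ne']

lemma single_mem_phiPlus {r : ℕ} (q : Fin r) :
    (fun k => if k = q then (2:ℝ) else 0) ∈ PhiPlus r := by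
  exact Or.inl ⟨q, by funext k; by_cases hk : k = q <;> simp [eVec, hk]⟩

lemma rootL_mem_phiPlus {r : ℕ} (σ : Equiv.Perm (Fin r)) (i : Fin r) :
    rootL σ i ∈ PhiPlus r := Or.inl ⟨σ⁻¹ i, rfl⟩

lemma rootP_mem_phiPlus {r : ℕ} (σ : Equiv.Perm (Fin r)) {i j : Fin r} (hji : j ≠ i) :
    rootP σ i j ∈ PhiPlus r := by
  have hab : σ⁻¹ i ≠ σ⁻¹ j := fun hh => hji (σ⁻¹.injective hh).symm
  rcases hab.lt_or_gt with h | h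
  · exact Or.inr ⟨σ⁻¹ i, σ⁻¹ j, h, Or.inl rfl⟩
  · exact Or.inr ⟨σ⁻¹ j, σ⁻¹ i, h, Or.inl (add_comm _ _)⟩

lemma rootM_mem_phiPlus {r : ℕ} (σ : Equiv.Perm (Fin r)) {i j : Fin r} (hji : j ≠ i) :
    rootM σ i j ∈ PhiPlus r := by
  have hab : σ⁻¹ i ≠ σ⁻¹ j := fun hh => hji (σ⁻¹.injective hh).symm
  rcases hab.lt_or_gt with h | h
  · exact Or.inr ⟨σ⁻¹ i, σ⁻¹ j, h, Or.inr (by rw [rootM, if_pos h])⟩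
  · exact Or.inr ⟨σ⁻¹ j, σ⁻¹ i, h, Or.inr (by rw [rootM, if_neg (not_lt.2 h.le)])⟩

lemma mem_phiW_rootL {r : ℕ} (σ : Equiv.Perm (Fin r)) (ε : Fin r → ℤˣ) (i : Fin r) :
    rootL σ i ∈ PhiW σ ε ↔ ε i = -1 := by
  constructor
  · rintro ⟨-, hv⟩
    rw [negw_rootL] at hv
    have h0 : (fun k => if k = i then -(2 * ((ε i : ℤ) : ℝ)) else 0) i ≠ 0 := by
      rcases Int.units_eq_one_or (ε i) with h | h <;> simp [h]
    have := phiPlus_pos_top hv h0 (fun n hn => by simp [hn.ne'])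
    simp only [if_pos rfl] at this
    rcases Int.units_eq_one_or (ε i) with h | h
    · simp [h] at this; linarith
    · exact h
  · intro h
    refine ⟨rootL_mem_phiPlus σ i, ?_⟩
    rw [negw_rootL]
    simpa [h] using single_mem_phiPlus (r := r) i

lemma mem_phiW_rootP {r : ℕ} (σ : Equiv.Perm (Fin r)) (ε : Fin r → ℤˣ) {i j : Fin r}
    (hji : j < i) : rootP σ i j ∈ PhiW σ ε ↔ ε i = -1 := by
  constructor
  · rintro ⟨-, hv⟩
    rw [negw_rootP σ ε hji.ne] at hv
    have h0 : (fun k => if k = j then -((ε j : ℤ) : ℝ) else if k = i then -((ε i : ℤ) : ℝ)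
        else 0) i ≠ 0 := by
      rcases Int.units_eq_one_or (ε i) with h | h <;> simp [h, hji.ne']
    have := phiPlus_pos_top hv h0
      (fun n hn => by simp [(hji.trans hn).ne', hn.ne'])
    simp only [if_neg hji.ne', if_pos rfl] at this
    exact (units_neg_pos_iff (ε i)).1 this
  · intro h
    refine ⟨rootP_mem_phiPlus σ hji.ne, ?_⟩
    rw [negw_rootP σ ε hji.ne]
    have : (fun k => if k = j then -((ε j : ℤ) : ℝ) else if k = i then -((ε i : ℤ) : ℝ) else 0)
        = fun k => if k = j then -((ε j : ℤ) : ℝ) else if k = i then 1 else 0 := by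
      simp [h]
    rw [this]
    refine pair_mem_phiPlus hji ?_
    rcases Int.units_eq_one_or (ε j) with h' | h' <;> simp [h']

lemma mem_phiW_rootM_lt {r : ℕ} (σ : Equiv.Perm (Fin r)) (ε : Fin r → ℤˣ) {i j : Fin r}
    (hji : j < i) (hlt : σ⁻¹ i < σ⁻¹ j) : rootM σ i j ∈ PhiW σ ε ↔ ε i = 1 := by
  constructor
  · rintro ⟨-, hv⟩
    rw [negw_rootM_lt σ ε hji.ne hlt] at hv
    have h0 : (fun k => if k = j then -((ε j : ℤ) : ℝ) else if k = i then ((ε i : ℤ) : ℝ)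
        else 0) i ≠ 0 := by
      rcases Int.units_eq_one_or (ε i) with h | h <;> simp [h, hji.ne']
    have := phiPlus_pos_top hv h0
      (fun n hn => by simp [(hji.trans hn).ne', hn.ne'])
    simp only [if_neg hji.ne', if_pos rfl] at this
    exact (units_pos_iff (ε i)).1 this
  · intro h
    refine ⟨rootM_mem_phiPlus σ hji.ne, ?_⟩
    rw [negw_rootM_lt σ ε hji.ne hlt]
    have : (fun k => if k = j then -((ε j : ℤ) : ℝ) else if k = i then ((ε i : ℤ) : ℝ) else 0)
        = fun k => if k = j then -((ε j : ℤ) : ℝ) else if k = i then 1 else 0 := by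
      simp [h]
    rw [this]
    refine pair_mem_phiPlus hji ?_
    rcases Int.units_eq_one_or (ε j) with h' | h' <;> simp [h']

lemma mem_phiW_rootM_gt {r : ℕ} (σ : Equiv.Perm (Fin r)) (ε : Fin r → ℤˣ) {i j : Fin r}
    (hji : j < i) (hgt : σ⁻¹ j < σ⁻¹ i) : rootM σ i j ∈ PhiW σ ε ↔ ε i = -1 := by
  constructor
  · rintro ⟨-, hv⟩
    rw [negw_rootM_gt σ ε hji.ne hgt] at hv
    have h0 : (fun k => if k = j then ((ε j : ℤ) : ℝ) else if k = i then -((ε i : ℤ) : ℝ)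
        else 0) i ≠ 0 := by
      rcases Int.units_eq_one_or (ε i) with h | h <;> simp [h, hji.ne']
    have := phiPlus_pos_top hv h0
      (fun n hn => by simp [(hji.trans hn).ne', hn.ne'])
    simp only [if_neg hji.ne', if_pos rfl] at this
    exact (units_neg_pos_iff (ε i)).1 this
  · intro h
    refine ⟨rootM_mem_phiPlus σ hji.ne, ?_⟩
    rw [negw_rootM_gt σ ε hji.ne hgt]
    have : (fun k => if k = j then ((ε j : ℤ) : ℝ) else if k = i then -((ε i : ℤ) : ℝ) else 0)
        = fun k => if k = j then ((ε j : ℤ) : ℝ) else if k = i then 1 else 0 := by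
      simp [h]
    rw [this]
    refine pair_mem_phiPlus hji ?_
    rcases Int.units_eq_one_or (ε j) with h' | h' <;> simp [h']

lemma units_ne {r : ℕ} (ε : Fin r → ℤˣ) (i : Fin r) (h1 : ε i = 1) (h2 : ε i = -1) : False := by
  rw [h1] at h2; exact absurd h2 (by decide)

/-- Let `0 < L_1 < ⋯ < L_r` be real numbers,
`λ+ρ = (L_1, …, L_r)`, `d_λ(α) = 2⟨λ+ρ, α⟩/⟨α, α⟩`, `w = (σ, ε) ∈ W(C_r)`,
and `D_i = { d_λ(α) : α ∈ Φ_w^{(i)} }`.  If `ε^{(i)} = +1` then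
`D_i = { L_{σ⁻¹(j)} − L_{σ⁻¹(i)} : j < i, σ⁻¹(j) > σ⁻¹(i) }`; if
`ε^{(i)} = −1` then `D_i = { L_{σ⁻¹(i)} } ∪ { L_{σ⁻¹(j)} + L_{σ⁻¹(i)} : j < i }
∪ { L_{σ⁻¹(i)} − L_{σ⁻¹(j)} : j < i, σ⁻¹(j) < σ⁻¹(i) }`. -/
theorem dlam_image_phiWi (r : ℕ) (L : Fin r → ℝ) (hpos : ∀ k, 0 < L k)
    (hmono : StrictMono L) (σ : Equiv.Perm (Fin r)) (ε : Fin r → ℤˣ) (i : Fin r) :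
    (ε i = 1 →
      dlam L '' PhiWi σ ε i
        = {x : ℝ | ∃ j : Fin r, j < i ∧ σ⁻¹ i < σ⁻¹ j ∧
            x = L (σ⁻¹ j) - L (σ⁻¹ i)}) ∧
    (ε i = -1 →
      dlam L '' PhiWi σ ε i
        = {L (σ⁻¹ i)}
          ∪ {x : ℝ | ∃ j : Fin r, j < i ∧ x = L (σ⁻¹ j) + L (σ⁻¹ i)}
          ∪ {x : ℝ | ∃ j : Fin r, j < i ∧ σ⁻¹ j < σ⁻¹ i ∧
              x = L (σ⁻¹ i) - L (σ⁻¹ j)}) := by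
  constructor
  · intro hε
    ext x
    simp only [Set.mem_image, Set.mem_setOf_eq, PhiWi]
    constructor
    · rintro ⟨α, ⟨hform, hW⟩, rfl⟩
      rcases hform with rfl | ⟨j, hj, rfl | rfl⟩
      · exact absurd ((mem_phiW_rootL σ ε i).1 hW) (fun h => units_ne ε i hε h)
      · exact absurd ((mem_phiW_rootP σ ε hj).1 hW) (fun h => units_ne ε i hε h)
      · rcases lt_trichotomy (σ⁻¹ i) (σ⁻¹ j) with hlt | heq | hgt
        · exact ⟨j, hj, hlt, by rw [dlam_rootM L σ hj.ne, if_pos hlt]⟩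
        · exact absurd (σ⁻¹.injective heq).symm hj.ne
        · exact absurd ((mem_phiW_rootM_gt σ ε hj hgt).1 hW) (fun h => units_ne ε i hε h)
    · rintro ⟨j, hj, hlt, rfl⟩
      exact ⟨rootM σ i j, ⟨Or.inr ⟨j, hj, Or.inr rfl⟩, (mem_phiW_rootM_lt σ ε hj hlt).2 hε⟩,
        by rw [dlam_rootM L σ hj.ne, if_pos hlt]⟩
  · intro hε
    ext x
    simp only [Set.mem_image, Set.mem_union, Set.mem_singleton_iff, Set.mem_setOf_eq, PhiWi]
    constructor
    · rintro ⟨α, ⟨hform, hW⟩, rfl⟩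
      rcases hform with rfl | ⟨j, hj, rfl | rfl⟩
      · exact Or.inl (Or.inl (dlam_rootL L σ i))
      · exact Or.inl (Or.inr ⟨j, hj, dlam_rootP L σ hj.ne⟩)
      · rcases lt_trichotomy (σ⁻¹ i) (σ⁻¹ j) with hlt | heq | hgt
        · exact absurd ((mem_phiW_rootM_lt σ ε hj hlt).1 hW) (fun h => units_ne ε i h hε)
        · exact absurd (σ⁻¹.injective heq).symm hj.ne
        · exact Or.inr ⟨j, hj, hgt,
            by rw [dlam_rootM L σ hj.ne, if_neg (not_lt.2 hgt.le)]⟩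
    · rintro ((rfl | ⟨j, hj, rfl⟩) | ⟨j, hj, hgt, rfl⟩)
      · exact ⟨rootL σ i, ⟨Or.inl rfl, (mem_phiW_rootL σ ε i).2 hε⟩, dlam_rootL L σ i⟩
      · exact ⟨rootP σ i j, ⟨Or.inr ⟨j, hj, Or.inl rfl⟩, (mem_phiW_rootP σ ε hj).2 hε⟩,
          dlam_rootP L σ hj.ne⟩
      · exact ⟨rootM σ i j, ⟨Or.inr ⟨j, hj, Or.inr rfl⟩, (mem_phiW_rootM_gt σ ε hj hgt).2 hε⟩,
          by rw [dlam_rootM L σ hj.ne, if_neg (not_lt.2 hgt.le)]⟩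
end
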